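/- arXiv:1609.01009 — 3 statements merged into one kernel-verified Lean document; each statement's English description precedes it below -/
import Mathlib

section
/- There exists β > 0 with the following property: for every open ‖·‖_∞-ball B centered at 0 in Mat_{m×n}(K) there is a constant b > 0 (depending on B but not on v) such that for each r = 1,…,d−1, every v ∈ ⋀^r K^d and every a ∈ 𝔞⁺, one has sup_{A ∈ B} ‖σ(g_a u_A) v‖_∞ ≥ b · q^{β·min(a)} · ‖v‖_∞, where σ: G → GL(⋀^r K^d) is the r-th exterior power representation. -/
set_option linter.unusedSectionVars false
set_option synthInstance.maxHeartbeats 1000000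
set_option maxHeartbeats 1000000
set_option linter.unusedTactic false

open MeasureTheory Matrix Filter Topology

noncomputable section

namespace PaperKL

variable (Fq : Type) [Field Fq] [Fintype Fq]

/-- The local field `K = 𝔽_q((t⁻¹))`, realized as the field of formal Laurent series
in the variable `X = t⁻¹` over `𝔽_q`. -/
abbrev KK (Fq : Type) [Field Fq] : Type := LaurentSeries Fq

/-- The element `t` (the inverse of the Laurent-series variable `X = t⁻¹`). -/
def tElem : KK Fq := HahnSeries.single (-1 : ℤ) 1

/-- The ring `Z = 𝔽_q[t]` of polynomials in `t`, as a subalgebra of `K`. -/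
def Zring : Subalgebra Fq (KK Fq) := Algebra.adjoin Fq {tElem Fq}

/-- The ring `𝒪 = 𝔽_q[[t⁻¹]]` of formal power series in `t⁻¹`, as a subset of `K`. -/
def Oring : Set (KK Fq) := {f | ∀ i : ℤ, i < 0 → f.coeff i = 0}

/-- The absolute value `|f| = q^{deg f}` on `K` (`deg` of a Laurent series in `t⁻¹`
is minus its order in `X = t⁻¹`). -/
def absK (f : KK Fq) : ℝ :=
  @ite _ (f = 0) (Classical.dec _) 0 ((Fintype.card Fq : ℝ) ^ (-f.order))

/-- Supremum norm on `K^d`. -/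
def normInf {d : ℕ} (x : Fin d → KK Fq) : ℝ := ⨆ i, absK Fq (x i)

/-- Supremum norm on matrices over `K`. -/
def normInfMat {m n : ℕ} (A : Fin m → Fin n → KK Fq) : ℝ := ⨆ i, ⨆ j, absK Fq (A i j)

/-- Weighted quasi-norm `‖x‖ = max_i |x_i|^{1/w i}`. -/
def normWt {k : ℕ} (w : Fin k → ℕ) (x : Fin k → KK Fq) : ℝ :=
  ⨆ i, (absK Fq (x i)) ^ ((w i : ℝ)⁻¹)

/-- The weighted quasi-norm `‖·‖_α` on `K^m` given by the first `m` weights. -/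
def normAlpha {m n : ℕ} (a : Fin (m + n) → ℕ) (x : Fin m → KK Fq) : ℝ :=
  normWt Fq (fun i => a (Fin.castAdd n i)) x

/-- The weighted quasi-norm `‖·‖_β` on `K^n` given by the last `n` weights. -/
def normBeta {m n : ℕ} (a : Fin (m + n) → ℕ) (y : Fin n → KK Fq) : ℝ :=
  normWt Fq (fun j => a (Fin.natAdd m j)) y

/-- `G = SL(d, K)`. -/
abbrev G (d : ℕ) : Type := Matrix.SpecialLinearGroup (Fin d) (KK Fq)

/-- `Γ = SL(d, Z)`, the subgroup of `G` of matrices with entries in `Z = 𝔽_q[t]`. -/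
def Gamma (d : ℕ) : Subgroup (G Fq d) :=
  (Matrix.SpecialLinearGroup.map (n := Fin d) (Zring Fq).toSubring.subtype).range

instance (d : ℕ) : TopologicalSpace (G Fq d) :=
  TopologicalSpace.induced (fun g => (g : Matrix (Fin d) (Fin d) (KK Fq))) inferInstance

instance : MeasurableSpace (KK Fq) := borel _

instance : BorelSpace (KK Fq) := ⟨rfl⟩

instance (d : ℕ) : MeasurableSpace (G Fq d) := borel _

/-- The homogeneous space `X = G/Γ`. -/
abbrev XSpace (d : ℕ) : Type := G Fq d ⧸ Gamma Fq d

lemma prod_zpow_eq {ι : Type*} (x : KK Fq) (hx : x ≠ 0) (s : Finset ι) (f : ι → ℤ) :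
    ∏ i ∈ s, x ^ f i = x ^ ∑ i ∈ s, f i := by
  classical
  induction s using Finset.induction with
  | empty => simp
  | insert a s h ih => rw [Finset.prod_insert h, Finset.sum_insert h, ih, zpow_add₀ hx]

lemma tElem_ne_zero : tElem Fq ≠ 0 := HahnSeries.single_ne_zero one_ne_zero

/-- The weight vector of the diagonal element `g_a`. -/
def wtVec (m n : ℕ) (a : Fin (m + n) → ℕ) : Fin (m + n) → ℤ :=
  Fin.addCases (fun i => (a (Fin.castAdd n i) : ℤ)) (fun j => -(a (Fin.natAdd m j) : ℤ))

/-- The diagonal element `g_a = diag(t^{a₁},…,t^{a_m},t^{−a_{m+1}},…,t^{−a_{m+n}}) ∈ SL(d,K)`. -/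
def ga {m n : ℕ} (a : Fin (m + n) → ℕ)
    (hsum : ∑ i : Fin m, a (Fin.castAdd n i) = ∑ j : Fin n, a (Fin.natAdd m j)) :
    G Fq (m + n) :=
  ⟨Matrix.diagonal (fun i => tElem Fq ^ wtVec m n a i), by
    rw [Matrix.det_diagonal, prod_zpow_eq Fq _ (tElem_ne_zero Fq)]
    have : ∑ i : Fin (m + n), wtVec m n a i = 0 := by
      rw [Fin.sum_univ_add]
      simp only [wtVec, Fin.addCases_left, Fin.addCases_right]
      rw [Finset.sum_neg_distrib]
      push_cast
      rw [← Nat.cast_sum, ← Nat.cast_sum, hsum]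
      ring
    rw [this, zpow_zero]⟩

/-- The unipotent element `u_A = [[I, A], [0, I]] ∈ SL(m+n, K)`. -/
def uA {m n : ℕ} (A : Fin m → Fin n → KK Fq) : G Fq (m + n) :=
  ⟨(Matrix.fromBlocks 1 (Matrix.of A) 0 1).submatrix finSumFinEquiv.symm finSumFinEquiv.symm, by
    rw [Matrix.det_submatrix_equiv_self, Matrix.det_fromBlocks_zero₂₁]; simp⟩

/-- `min a = min_i a_i`. -/
def minWt {k : ℕ} (a : Fin k → ℕ) : ℕ := ⨅ i, a i

/-- The product measure `λ^{mn}` on `Mat_{m×n}(K)`. -/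
def lamMat (m n : ℕ) (lam : Measure (KK Fq)) : Measure (Fin m → Fin n → KK Fq) :=
  Measure.pi fun _ => Measure.pi fun _ => lam

/-- The product measure `λ^d` on `K^d`. -/
def lamVec (d : ℕ) (lam : Measure (KK Fq)) : Measure (Fin d → KK Fq) :=
  Measure.pi fun _ => lam

/-- `C_c^∞(X)`: compactly supported functions on `X = G/Γ` whose lift to `G` is smooth,
i.e. right-invariant under some compact open subgroup of `G`. -/
def IsSmoothCc (d : ℕ) (φ : XSpace Fq d → ℝ) : Prop :=
  HasCompactSupport φ ∧
    ∃ U : Subgroup (G Fq d), IsOpen (U : Set (G Fq d)) ∧ IsCompact (U : Set (G Fq d)) ∧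
      ∀ g u : G Fq d, u ∈ U → φ (QuotientGroup.mk (g * u)) = φ (QuotientGroup.mk g)

/-- `C_c^∞(H)`, in the coordinates `H ≃ Mat_{m×n}(K)`: compactly supported smooth
(locally constant) functions. -/
def IsSmoothCcH (m n : ℕ) (f : (Fin m → Fin n → KK Fq) → ℝ) : Prop :=
  HasCompactSupport f ∧
    ∃ U : AddSubgroup (Fin m → Fin n → KK Fq),
      IsOpen (U : Set (Fin m → Fin n → KK Fq)) ∧
      IsCompact (U : Set (Fin m → Fin n → KK Fq)) ∧
      ∀ A B, B ∈ U → f (A + B) = f A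

/-- The lattice `g·Z^d ⊆ K^d` attached to `g`. -/
def latticeOf {d : ℕ} (g : Matrix (Fin d) (Fin d) (KK Fq)) : Set (Fin d → KK Fq) :=
  {v | ∃ w : Fin d → KK Fq, (∀ i, w i ∈ Zring Fq) ∧ v = g.mulVec w}

/-- `δ(g·Z^d)`: the length of the shortest nonzero vector of the lattice `g·Z^d`. -/
def deltaOf {d : ℕ} (g : Matrix (Fin d) (Fin d) (KK Fq)) : ℝ :=
  sInf {c | ∃ v ∈ latticeOf Fq g, v ≠ 0 ∧ c = normInf Fq v}

/-- `‖w₁ ∧ ⋯ ∧ w_r‖_∞`: the supremum norm of the coordinates of the wedge of `r` vectors in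
the standard basis of `⋀^r K^d`, i.e. the sup of the absolute values of the `r×r` minors. -/
def wedgeNorm {d r : ℕ} (w : Fin r → Fin d → KK Fq) : ℝ :=
  ⨆ I : {s : Finset (Fin d) // s.card = r},
    absK Fq (Matrix.det (Matrix.of fun i j : Fin r => w j ((I.1.orderIsoOfFin I.2 i : Fin d))))

/-- `α(g·Z^d)`: the supremum of `vol(KΔ/Δ)⁻¹` over `Z`-submodules `Δ` of the lattice `g·Z^d`,
where the covolume of a rank-`r` submodule with `Z`-basis `w₁,…,w_r` is `‖w₁ ∧ ⋯ ∧ w_r‖_∞`. -/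
def alphaOf {d : ℕ} (g : Matrix (Fin d) (Fin d) (KK Fq)) : ℝ :=
  sSup {c | ∃ r : ℕ, r ≤ d ∧ ∃ w : Fin r → Fin d → KK Fq,
    (∀ j, w j ∈ latticeOf Fq g) ∧ LinearIndependent (KK Fq) w ∧ c = (wedgeNorm Fq w)⁻¹}

/-- The congruence subgroup `K^{(l)} = (Id + t^{-l} Mat(d,𝒪)) ∩ SL(d,𝒪)` (for `l = 0`
this is `K₀ = SL(d,𝒪)`), as a subset of `G`. -/
def congSet (d l : ℕ) : Set (G Fq d) :=
  {g | ∀ i j : Fin d, ∀ s : ℤ, s < l →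
    ((g : Matrix (Fin d) (Fin d) (KK Fq)) i j
      - (1 : Matrix (Fin d) (Fin d) (KK Fq)) i j).coeff s = 0}

/-- The averaging operator `Av_l` over `K^{(l)}`, where `η l` is the probability Haar
measure on `K^{(l)}`. -/
def avgX {d : ℕ} (η : ℕ → Measure (G Fq d)) (l : ℕ) (φ : XSpace Fq d → ℝ) :
    XSpace Fq d → ℝ := fun x => ∫ k, φ (k • x) ∂(η l)

/-- The level-`l` projection `pr[l]`. -/
def prX {d : ℕ} (η : ℕ → Measure (G Fq d)) : ℕ → (XSpace Fq d → ℝ) → XSpace Fq d → ℝ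
  | 0 => fun φ => avgX Fq η 0 φ
  | (l + 1) => fun φ => avgX Fq η (l + 1) φ - avgX Fq η l φ

/-- The degree-`k` Sobolev norm `S_k(φ)` on `X`: `S_k(φ)² = Σ_{l≥0} q^{lk}‖pr[l]φ‖₂²`. -/
def sobolevX {d : ℕ} (η : ℕ → Measure (G Fq d)) (mu : Measure (XSpace Fq d)) (k : ℕ)
    (φ : XSpace Fq d → ℝ) : ℝ :=
  Real.sqrt (∑' l : ℕ, (Fintype.card Fq : ℝ) ^ (l * k) * ∫ x, (prX Fq η l φ x) ^ 2 ∂mu)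

/-- The family `η` is the family of probability Haar measures on the congruence
subgroups `K^{(l)}` of `G`. -/
def IsHaarFamily (d : ℕ) (η : ℕ → Measure (G Fq d)) : Prop :=
  ∀ l : ℕ, IsProbabilityMeasure (η l) ∧ η l (congSet Fq d l)ᶜ = 0 ∧
    ∀ k ∈ congSet Fq d l, Measure.map (fun g => k * g) (η l) = η l

/-- `K^{(l)} ∩ H` in the coordinates of `H`: matrices with entries in `t^{-l}𝒪`. -/
def congSetH (m n : ℕ) (l : ℕ) : Set (Fin m → Fin n → KK Fq) :=
  {A | ∀ i j, ∀ s : ℤ, s < l → (A i j).coeff s = 0}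

/-- The probability Haar measure on `K^{(l)} ∩ H`: the normalized restriction of `λ^{mn}`. -/
def haarCongH (m n : ℕ) (lam : Measure (KK Fq)) (l : ℕ) : Measure (Fin m → Fin n → KK Fq) :=
  (lamMat Fq m n lam (congSetH Fq m n l))⁻¹ • (lamMat Fq m n lam).restrict (congSetH Fq m n l)

/-- The averaging operator `Av_l` over `K^{(l)} ∩ H` on functions on `H`. -/
def avgH {m n : ℕ} (lam : Measure (KK Fq)) (l : ℕ) (f : (Fin m → Fin n → KK Fq) → ℝ) :
    (Fin m → Fin n → KK Fq) → ℝ := fun A => ∫ B, f (A + B) ∂(haarCongH Fq m n lam l)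

/-- The level-`l` projection `pr[l]` on functions on `H`. -/
def prH {m n : ℕ} (lam : Measure (KK Fq)) :
    ℕ → ((Fin m → Fin n → KK Fq) → ℝ) → (Fin m → Fin n → KK Fq) → ℝ
  | 0 => fun f => avgH Fq lam 0 f
  | (l + 1) => fun f => avgH Fq lam (l + 1) f - avgH Fq lam l f

/-- The degree-`k` Sobolev norm on `C_c^∞(H)`. -/
def sobolevH {m n : ℕ} (lam : Measure (KK Fq)) (k : ℕ)
    (f : (Fin m → Fin n → KK Fq) → ℝ) : ℝ :=
  Real.sqrt (∑' l : ℕ, (Fintype.card Fq : ℝ) ^ (l * k) *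
    ∫ A, (prH Fq lam l f A) ^ 2 ∂(lamMat Fq m n lam))

/-- Splitting of a vector of `K^{m+n}` into its first `m` and last `n` coordinates. -/
def vSplit {m n : ℕ} (v : Fin (m + n) → KK Fq) : (Fin m → KK Fq) × (Fin n → KK Fq) :=
  (fun i => v (Fin.castAdd n i), fun j => v (Fin.natAdd m j))

/-- `π_α(x) ∈ C`: some point of the weighted dilation orbit
`{(t^{k a₁}x₁,…,t^{k a_m}x_m) : k ∈ ℤ}` of `x` lies in `C` (`C` a subset of the unit
sphere `S^{m-1}`). -/
def dirMemA {m n : ℕ} (a : Fin (m + n) → ℕ) (C : Set (Fin m → KK Fq))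
    (x : Fin m → KK Fq) : Prop :=
  ∃ k : ℤ, (fun i => tElem Fq ^ (k * (a (Fin.castAdd n i) : ℤ)) * x i) ∈ C

/-- `π_β(y) ∈ C` for the weights `a_{m+1},…,a_{m+n}`. -/
def dirMemB {m n : ℕ} (a : Fin (m + n) → ℕ) (C : Set (Fin n → KK Fq))
    (y : Fin n → KK Fq) : Prop :=
  ∃ k : ℤ, (fun j => tElem Fq ^ (k * (a (Fin.natAdd m j) : ℤ)) * y j) ∈ C

/-- The set `E_{T,R} = {(x,y) : ‖x‖_α < q^R/‖y‖_β, 1 ≤ ‖y‖_β ≤ q^T}`. -/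
def ESet {m n : ℕ} (a : Fin (m + n) → ℕ) (T R : ℝ) :
    Set ((Fin m → KK Fq) × (Fin n → KK Fq)) :=
  {p | normAlpha Fq a p.1 < (Fintype.card Fq : ℝ) ^ R / normBeta Fq a p.2 ∧
       1 ≤ normBeta Fq a p.2 ∧ normBeta Fq a p.2 ≤ (Fintype.card Fq : ℝ) ^ T}

/-- The set `F_{S,R} = {(x,y) : ‖x‖_α < q^R/‖y‖_β, 1 ≤ ‖x‖_α ≤ q^S}`. -/
def FSet {m n : ℕ} (a : Fin (m + n) → ℕ) (S R : ℝ) :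
    Set ((Fin m → KK Fq) × (Fin n → KK Fq)) :=
  {p | normAlpha Fq a p.1 < (Fintype.card Fq : ℝ) ^ R / normBeta Fq a p.2 ∧
       1 ≤ normAlpha Fq a p.1 ∧ normAlpha Fq a p.1 ≤ (Fintype.card Fq : ℝ) ^ S}

/-- The set `E_{T,R}(C₁,C₂)`: points of `E_{T,R}` with directions in `C₁`, `C₂`. -/
def ESetDir {m n : ℕ} (a : Fin (m + n) → ℕ) (T R : ℝ)
    (C₁ : Set (Fin m → KK Fq)) (C₂ : Set (Fin n → KK Fq)) :
    Set ((Fin m → KK Fq) × (Fin n → KK Fq)) :=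
  {p | p ∈ ESet Fq a T R ∧ dirMemA Fq a C₁ p.1 ∧ dirMemB Fq a C₂ p.2}

/-- `N_R(T,A)`: the number of nonzero `(p,q) ∈ Z^m × Z^n` with
`‖Aq − p‖_α < q^R/‖q‖_β` and `1 ≤ ‖q‖_β ≤ q^T`. -/
def countSol {m n : ℕ} (a : Fin (m + n) → ℕ) (T R : ℝ) (A : Fin m → Fin n → KK Fq) : ℕ :=
  Nat.card {pq : (Fin m → KK Fq) × (Fin n → KK Fq) //
    pq ≠ 0 ∧ (∀ i, pq.1 i ∈ Zring Fq) ∧ (∀ j, pq.2 j ∈ Zring Fq) ∧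
    ((Matrix.of A).mulVec pq.2 - pq.1, pq.2) ∈ ESet Fq a T R}

/-- `N_R(T,A)(C₁,C₂)`: as `countSol`, with the direction constraints
`π_α(Aq−p) ∈ C₁`, `π_β(q) ∈ C₂`. -/
def countSolDir {m n : ℕ} (a : Fin (m + n) → ℕ) (T R : ℝ)
    (C₁ : Set (Fin m → KK Fq)) (C₂ : Set (Fin n → KK Fq)) (A : Fin m → Fin n → KK Fq) : ℕ :=
  Nat.card {pq : (Fin m → KK Fq) × (Fin n → KK Fq) //
    pq ≠ 0 ∧ (∀ i, pq.1 i ∈ Zring Fq) ∧ (∀ j, pq.2 j ∈ Zring Fq) ∧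
    ((Matrix.of A).mulVec pq.2 - pq.1, pq.2) ∈ ESetDir Fq a T R C₁ C₂}

/-- The Siegel transform `f̂(Λ) = Σ_{v ∈ Λ∖{0}} f(v)` of the characteristic function of a
set `S ⊆ K^d`, evaluated at the lattice `g·Z^d`. -/
def siegel {d : ℕ} (S : Set (Fin d → KK Fq)) (g : Matrix (Fin d) (Fin d) (KK Fq)) : ℕ :=
  Nat.card {v : Fin d → KK Fq // v ∈ latticeOf Fq g ∧ v ≠ 0 ∧ v ∈ S}

/-- The ball of radius `ρ` centered at the origin in `(K^d, ‖·‖_∞)`. -/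
def ballVec (d : ℕ) (ρ : ℝ) : Set (Fin d → KK Fq) := {v | normInf Fq v < ρ}

/-- The ball of radius `ρ` centered at `0` in `(Mat_{m×n}(K), ‖·‖_∞)`
(equivalently, the ball centered at the identity in `H`). -/
def ballMat (m n : ℕ) (ρ : ℝ) : Set (Fin m → Fin n → KK Fq) := {A | normInfMat Fq A < ρ}

/-- The ball of radius `ρ` centered at the identity in `G`, for the metric induced by the
supremum norm on matrix entries. -/
def ballG (d : ℕ) (ρ : ℝ) : Set (G Fq d) :=
  {g | normInfMat Fq (fun i j => (g : Matrix (Fin d) (Fin d) (KK Fq)) i j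
        - (1 : Matrix (Fin d) (Fin d) (KK Fq)) i j) < ρ}


/-- The matrix of the `r`-th exterior power representation `σ : G → GL(⋀^r K^d)`
in the standard basis `{e_{i₁}∧⋯∧e_{i_r} : i₁<⋯<i_r}` (indexed by `r`-element subsets
of `Fin d`): the `r`-th compound matrix, whose entries are the `r×r` minors. -/
def compound {d : ℕ} (g : Matrix (Fin d) (Fin d) (KK Fq)) (r : ℕ) :
    Matrix {s : Finset (Fin d) // s.card = r} {s : Finset (Fin d) // s.card = r} (KK Fq) :=
  Matrix.of fun I J => Matrix.det (Matrix.of fun i j : Fin r =>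
    g ((I.1.orderIsoOfFin I.2 i : Fin d)) ((J.1.orderIsoOfFin J.2 j : Fin d)))

/-- The supremum norm on `⋀^r K^d` in the standard-basis coordinates. -/
def extNorm {d r : ℕ} (v : {s : Finset (Fin d) // s.card = r} → KK Fq) : ℝ :=
  ⨆ I, absK Fq (v I)

lemma qgt1 : (1:ℝ) < (Fintype.card Fq : ℝ) := by
  exact_mod_cast Fintype.one_lt_card

lemma qpos : (0:ℝ) < (Fintype.card Fq : ℝ) := lt_trans one_pos (qgt1 Fq)

lemma absK_zero : absK Fq 0 = 0 := if_pos rfl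

lemma absK_of_ne {x : KK Fq} (hx : x ≠ 0) :
    absK Fq x = (Fintype.card Fq : ℝ) ^ (-x.order) := if_neg hx

lemma absK_nonneg (x : KK Fq) : 0 ≤ absK Fq x := by
  by_cases hx : x = 0
  · simp [hx, absK_zero]
  · rw [absK_of_ne Fq hx]
    exact le_of_lt (zpow_pos (qpos Fq) _)

lemma absK_pos {x : KK Fq} (hx : x ≠ 0) : 0 < absK Fq x := by
  rw [absK_of_ne Fq hx]; exact zpow_pos (qpos Fq) _

lemma absK_mul (x y : KK Fq) : absK Fq (x * y) = absK Fq x * absK Fq y := by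
  by_cases hx : x = 0
  · simp [hx, absK_zero]
  by_cases hy : y = 0
  · simp [hy, absK_zero]
  have hxy : x * y ≠ 0 := mul_ne_zero hx hy
  rw [absK_of_ne Fq hx, absK_of_ne Fq hy, absK_of_ne Fq hxy,
    HahnSeries.order_mul hx hy, neg_add, zpow_add₀ (ne_of_gt (qpos Fq))]

lemma absK_neg (x : KK Fq) : absK Fq (-x) = absK Fq x := by
  by_cases hx : x = 0
  · simp [hx]
  · rw [absK_of_ne Fq (neg_ne_zero.2 hx), absK_of_ne Fq hx, HahnSeries.order_neg]

lemma absK_one : absK Fq 1 = 1 := by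
  rw [absK_of_ne Fq one_ne_zero, HahnSeries.order_one, neg_zero, zpow_zero]

lemma absK_add_le (x y : KK Fq) :
    absK Fq (x + y) ≤ max (absK Fq x) (absK Fq y) := by
  by_cases hxy : x + y = 0
  · rw [hxy, absK_zero]
    exact le_max_of_le_left (absK_nonneg Fq x)
  by_cases hx : x = 0
  · simp only [hx, zero_add]; exact le_max_right _ _
  by_cases hy : y = 0
  · simp only [hy, add_zero]; exact le_max_left _ _
  have h := HahnSeries.min_order_le_order_add hxy
  rw [absK_of_ne Fq hx, absK_of_ne Fq hy, absK_of_ne Fq hxy]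
  have hmono : Monotone fun k : ℤ => (Fintype.card Fq : ℝ) ^ k :=
    fun a b hab => zpow_le_zpow_right₀ (qgt1 Fq).le hab
  calc (Fintype.card Fq : ℝ) ^ (-(x + y).order)
      ≤ (Fintype.card Fq : ℝ) ^ (-(min x.order y.order)) := hmono (neg_le_neg h)
    _ = (Fintype.card Fq : ℝ) ^ (max (-x.order) (-y.order)) := by rw [neg_inf]
    _ = max ((Fintype.card Fq : ℝ) ^ (-x.order)) ((Fintype.card Fq : ℝ) ^ (-y.order)) :=
        hmono.map_max

lemma absK_sum_le {ι : Type*} (s : Finset ι) (f : ι → KK Fq) (C : ℝ) (hC : 0 ≤ C)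
    (h : ∀ i ∈ s, absK Fq (f i) ≤ C) : absK Fq (∑ i ∈ s, f i) ≤ C := by
  classical
  induction s using Finset.induction with
  | empty => simpa [absK_zero] using hC
  | @insert a s ha ih =>
      rw [Finset.sum_insert ha]
      refine le_trans (absK_add_le Fq _ _) (max_le (h a (Finset.mem_insert_self a s)) ?_)
      exact ih (fun i hi => h i (Finset.mem_insert_of_mem hi))

lemma tElem_pow_nat (k : ℕ) : tElem Fq ^ k = HahnSeries.single (-(k:ℤ)) (1:Fq) := by
  induction k with
  | zero => simp [HahnSeries.single_zero_one]
  | succ k ih =>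
      rw [pow_succ, ih, tElem, HahnSeries.single_mul_single, mul_one]
      congr 1
      push_cast
      ring

lemma tElem_zpow (k : ℤ) : tElem Fq ^ k = HahnSeries.single (-k) (1:Fq) := by
  rcases k with k | k
  · rw [Int.ofNat_eq_coe, zpow_natCast, tElem_pow_nat]
  · rw [zpow_negSucc, tElem_pow_nat]
    refine inv_eq_of_mul_eq_one_right ?_
    rw [HahnSeries.single_mul_single, one_mul]
    have : (-(((k:ℕ)+1:ℕ)):ℤ) + (-(Int.negSucc k)) = 0 := by
      rw [Int.negSucc_eq]; push_cast; ring
    rw [this, HahnSeries.single_zero_one]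

lemma absK_tzpow (k : ℤ) : absK Fq (tElem Fq ^ k) = (Fintype.card Fq : ℝ) ^ k := by
  rw [tElem_zpow, absK_of_ne Fq (HahnSeries.single_ne_zero one_ne_zero),
    HahnSeries.order_single one_ne_zero, neg_neg]

lemma alt_sum_indicator {ι : Type*} [DecidableEq ι] [Fintype ι] (P : Finset ι) (z : KK Fq) :
    ∑ T : Finset ι, (-1 : KK Fq) ^ (Tᶜ.card) * (if P ⊆ T then z else 0)
      = if P = Finset.univ then z else 0 := by
  have hbij : Function.Bijective (fun T : Finset ι => Tᶜ) :=
    Function.Involutive.bijective (fun T => compl_compl T)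
  rw [← Function.Bijective.sum_comp hbij
    (fun T => (-1 : KK Fq) ^ (Tᶜ.card) * (if P ⊆ T then z else 0))]
  simp only [compl_compl]
  have : ∀ T : Finset ι, (P ⊆ Tᶜ) = (T ⊆ Pᶜ) := fun T => propext (Finset.subset_compl_comm)
  simp only [this]
  calc ∑ T : Finset ι, (-1 : KK Fq) ^ (T.card) * (if T ⊆ Pᶜ then z else 0)
      = ∑ T : Finset ι, (if T ⊆ Pᶜ then (-1 : KK Fq) ^ (T.card) * z else 0) := by
        simp [mul_ite]
    _ = ∑ T ∈ Finset.univ.filter (fun T : Finset ι => T ⊆ Pᶜ), (-1 : KK Fq) ^ (T.card) * z := by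
        rw [Finset.sum_filter]
    _ = ∑ T ∈ Pᶜ.powerset, (-1 : KK Fq) ^ (T.card) * z := by
        congr 1
        ext T
        simp [Finset.mem_powerset]
    _ = (∑ T ∈ Pᶜ.powerset, (-1 : KK Fq) ^ (T.card)) * z := by rw [Finset.sum_mul]
    _ = (((∑ T ∈ Pᶜ.powerset, (-1 : ℤ) ^ (T.card)) : ℤ) : KK Fq) * z := by push_cast; ring
    _ = (if P = Finset.univ then z else 0) := by
        rw [Finset.sum_powerset_neg_one_pow_card]
        by_cases hP : P = Finset.univ
        · have : Pᶜ = ∅ := (Finset.compl_eq_empty_iff P).mpr hP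
          simp [hP, this]
        · have : Pᶜ ≠ ∅ := fun h => hP ((Finset.compl_eq_empty_iff P).mp h)
          simp [hP, this]


/-- generic entry-sum matrix -/
def UmatD {d s : ℕ} (rowOf colOf : Fin s → Fin d) (x : Fin s → KK Fq) :
    Matrix (Fin d) (Fin d) (KK Fq) :=
  1 + ∑ p : Fin s, x p • Matrix.single (rowOf p) (colOf p) (1 : KK Fq)

def eColD {d r : ℕ} (rowI : Fin r → Fin d) (g : Fin d) : Fin r → KK Fq :=
  fun i => if rowI i = g then 1 else 0

def pvarD {d r s : ℕ} (colOf : Fin s → Fin d) (colJ : Fin r → Fin d) (j : Fin r) :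
    Option (Fin s) :=
  if h : ∃ p, colOf p = colJ j then some h.choose else none

def gfunD {d r s : ℕ} (rowOf colOf : Fin s → Fin d) (colJ : Fin r → Fin d) (j : Fin r) :
    Fin d :=
  (pvarD colOf colJ j).elim (colJ j) rowOf

def wcolD {d r s : ℕ} (rowI : Fin r → Fin d) (rowOf colOf : Fin s → Fin d)
    (colJ : Fin r → Fin d) (j : Fin r) : Fin r → KK Fq :=
  (pvarD colOf colJ j).elim 0 (fun p => eColD Fq rowI (rowOf p))

def acolD {d r : ℕ} (rowI : Fin r → Fin d) (colJ : Fin r → Fin d) (j : Fin r) :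
    Fin r → KK Fq :=
  eColD Fq rowI (colJ j)

def cvarD {d r s : ℕ} (colOf : Fin s → Fin d) (colJ : Fin r → Fin d)
    (x : Fin s → KK Fq) (j : Fin r) : KK Fq :=
  (pvarD colOf colJ j).elim 0 x

def gMatD {d r s : ℕ} (rowI : Fin r → Fin d) (rowOf colOf : Fin s → Fin d)
    (colJ : Fin r → Fin d) : Matrix (Fin r) (Fin r) (KK Fq) :=
  Matrix.of fun j i => if rowI i = gfunD rowOf colOf colJ j then (1 : KK Fq) else 0

section DetLemmas

variable {d r s : ℕ}

lemma pvar_some {colOf : Fin s → Fin d} {colJ : Fin r → Fin d} {j : Fin r} {p : Fin s}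
    (h : pvarD colOf colJ j = some p) : colOf p = colJ j := by
  unfold pvarD at h
  split at h
  · rename_i hex
    obtain rfl : hex.choose = p := by injection h
    exact hex.choose_spec
  · exact absurd h (by simp)

lemma pvar_some' {colOf : Fin s → Fin d} {colJ : Fin r → Fin d} {j : Fin r} {p : Fin s}
    (hcolOf : Function.Injective colOf) (h : colOf p = colJ j) :
    pvarD colOf colJ j = some p := by
  unfold pvarD
  have hex : ∃ p, colOf p = colJ j := ⟨p, h⟩
  rw [dif_pos hex]
  exact congrArg some (hcolOf (hex.choose_spec.trans h.symm))

lemma pvar_none {colOf : Fin s → Fin d} {colJ : Fin r → Fin d} {j : Fin r}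
    (h : pvarD colOf colJ j = none) : ∀ p, colOf p ≠ colJ j := by
  intro p hp
  unfold pvarD at h
  rw [dif_pos ⟨p, hp⟩] at h
  simp at h

lemma umat_entry (rowI : Fin r → Fin d) (rowOf colOf : Fin s → Fin d)
    (hcolOf : Function.Injective colOf) (colJ : Fin r → Fin d) (x : Fin s → KK Fq)
    (i j : Fin r) :
    UmatD Fq rowOf colOf x (rowI i) (colJ j) =
      acolD Fq rowI colJ j i + cvarD Fq colOf colJ x j * wcolD Fq rowI rowOf colOf colJ j i := by
  unfold UmatD
  rw [Matrix.add_apply, Matrix.sum_apply]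
  have h1 : (1 : Matrix (Fin d) (Fin d) (KK Fq)) (rowI i) (colJ j) = acolD Fq rowI colJ j i := by
    rw [Matrix.one_apply]
    unfold acolD eColD
    rfl
  rw [h1]
  congr 1
  rcases hpv : pvarD colOf colJ j with _ | p₀
  · have hno := pvar_none hpv
    rw [Finset.sum_eq_zero]
    · unfold cvarD
      rw [hpv]
      simp
    · intro p _
      rw [Matrix.smul_apply]
      have : Matrix.single (rowOf p) (colOf p) (1 : KK Fq) (rowI i) (colJ j) = 0 := by
        unfold Matrix.single
        rw [Matrix.of_apply, if_neg]
        rintro ⟨-, h2⟩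
        exact hno p h2
      rw [this, smul_zero]
  · have hp₀ : colOf p₀ = colJ j := pvar_some hpv
    rw [Finset.sum_eq_single p₀]
    · unfold cvarD wcolD
      rw [hpv]
      simp only [Option.elim_some]
      rw [Matrix.smul_apply]
      unfold Matrix.single eColD
      rw [Matrix.of_apply, smul_eq_mul]
      by_cases hri : rowOf p₀ = rowI i
      · rw [if_pos ⟨hri, hp₀⟩, if_pos hri.symm]
      · rw [if_neg (fun hc => hri hc.1), if_neg (fun hc => hri hc.symm), mul_zero]
    · intro p _ hne
      rw [Matrix.smul_apply]
      have : Matrix.single (rowOf p) (colOf p) (1 : KK Fq) (rowI i) (colJ j) = 0 := by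
        unfold Matrix.single
        rw [Matrix.of_apply, if_neg]
        rintro ⟨-, h2⟩
        exact hne (hcolOf (h2.trans hp₀.symm))
      rw [this, smul_zero]
    · intro h
      exact absurd (Finset.mem_univ p₀) h

lemma step1 (rowI : Fin r → Fin d) (rowOf colOf : Fin s → Fin d)
    (hcolOf : Function.Injective colOf) (colJ : Fin r → Fin d) (x : Fin s → KK Fq) :
    Matrix.det (Matrix.of fun i j => UmatD Fq rowOf colOf x (rowI i) (colJ j)) =
      ∑ T : Finset (Fin r), (∏ j ∈ T, cvarD Fq colOf colJ x j) *
        Matrix.det (Matrix.of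
          (T.piecewise (wcolD Fq rowI rowOf colOf colJ) (acolD Fq rowI colJ))) := by
  classical
  set a := acolD Fq rowI colJ with ha
  set w := wcolD Fq rowI rowOf colOf colJ with hw
  set c := cvarD Fq colOf colJ x with hc
  have hT : (Matrix.of fun i j => UmatD Fq rowOf colOf x (rowI i) (colJ j))ᵀ =
      Matrix.of ((fun j => c j • w j) + a) := by
    refine Matrix.ext fun j i => ?_
    rw [Matrix.transpose_apply, Matrix.of_apply, Matrix.of_apply,
      umat_entry Fq rowI rowOf colOf hcolOf colJ x i j]
    simp only [Pi.add_apply, Pi.smul_apply, smul_eq_mul]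
    ring
  rw [← Matrix.det_transpose, hT]
  show (Matrix.detRowAlternating (R := KK Fq) (n := Fin r)).toMultilinearMap
      ((fun j => c j • w j) + a) = _
  rw [MultilinearMap.map_add_univ]
  refine Finset.sum_congr rfl fun T _ => ?_
  set m₀ := T.piecewise w a with hm₀
  have hpc : T.piecewise (fun j => c j • m₀ j) m₀ = T.piecewise (fun j => c j • w j) a := by
    ext j i
    by_cases hj : j ∈ T
    · rw [Finset.piecewise_eq_of_mem _ _ _ hj, Finset.piecewise_eq_of_mem _ _ _ hj, hm₀,
        Finset.piecewise_eq_of_mem _ _ _ hj]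
    · rw [Finset.piecewise_eq_of_notMem _ _ _ hj, Finset.piecewise_eq_of_notMem _ _ _ hj, hm₀,
        Finset.piecewise_eq_of_notMem _ _ _ hj]
  have hkey := (Matrix.detRowAlternating (R := KK Fq) (n := Fin r)).toMultilinearMap.map_piecewise_smul
    c m₀ T
  rw [hpc] at hkey
  rw [hkey, smul_eq_mul]
  rfl

end DetLemmas



section DetLemmas2

variable {d r s : ℕ}

lemma prod_ite_zero {ι : Type*} (T : Finset ι) (Q : ι → Prop) [DecidablePred Q] (u : KK Fq) :
    (∏ j ∈ T, if Q j then u else 0) = if (∀ j ∈ T, Q j) then u ^ T.card else 0 := by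
  by_cases h : ∀ j ∈ T, Q j
  · rw [if_pos h, Finset.prod_congr rfl (fun j hj => if_pos (h j hj)), Finset.prod_const]
  · rw [if_neg h]
    push_neg at h
    obtain ⟨j, hj, hq⟩ := h
    exact Finset.prod_eq_zero hj (if_neg hq)

lemma cvar_chi (colOf : Fin s → Fin d) (colJ : Fin r → Fin d) (Tv : Finset (Fin s))
    (u : KK Fq) (j : Fin r) :
    cvarD Fq colOf colJ (fun p => if p ∈ Tv then u else 0) j
      = if (∃ p ∈ Tv, pvarD colOf colJ j = some p) then u else 0 := by
  rcases hpv : pvarD colOf colJ j with _ | p₀ <;> unfold cvarD <;> rw [hpv]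
  · simp
  · simp only [Option.elim_some]
    by_cases hp : p₀ ∈ Tv
    · rw [if_pos hp, if_pos ⟨p₀, hp, rfl⟩]
    · rw [if_neg hp, if_neg]
      rintro ⟨p, hpTv, hsome⟩
      obtain rfl : p₀ = p := by injection hsome
      exact hp hpTv

lemma gdet_zero_row (rowI : Fin r → Fin d) (rowOf colOf : Fin s → Fin d)
    (colJ : Fin r → Fin d) (h : ∃ j, ∀ i, rowI i ≠ gfunD rowOf colOf colJ j) :
    Matrix.det (gMatD Fq rowI rowOf colOf colJ) = 0 := by
  obtain ⟨j, hj⟩ := h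
  apply Matrix.det_eq_zero_of_row_eq_zero j
  intro i
  unfold gMatD
  rw [Matrix.of_apply, if_neg (hj i)]

lemma gdet_zero_inj (rowI : Fin r → Fin d) (rowOf colOf : Fin s → Fin d)
    (colJ : Fin r → Fin d) (h : ¬ Function.Injective (gfunD rowOf colOf colJ)) :
    Matrix.det (gMatD Fq rowI rowOf colOf colJ) = 0 := by
  rw [Function.not_injective_iff] at h
  obtain ⟨j1, j2, heq, hne⟩ := h
  refine Matrix.det_zero_of_row_eq hne ?_
  funext i
  unfold gMatD
  rw [Matrix.of_apply, Matrix.of_apply, heq]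

lemma gdet_abs_one (rowI : Fin r → Fin d) (hrowI : Function.Injective rowI)
    (rowOf colOf : Fin s → Fin d) (colJ : Fin r → Fin d)
    (hinj : Function.Injective (gfunD rowOf colOf colJ))
    (hsur : ∀ j, ∃ i, rowI i = gfunD rowOf colOf colJ j) :
    absK Fq (Matrix.det (gMatD Fq rowI rowOf colOf colJ)) = 1 := by
  classical
  have hσspec : ∀ j, rowI ((hsur j).choose) = gfunD rowOf colOf colJ j :=
    fun j => (hsur j).choose_spec
  have hσinj : Function.Injective (fun j => (hsur j).choose : Fin r → Fin r) := by
    intro j1 j2 h12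
    apply hinj
    rw [← hσspec j1, ← hσspec j2]
    exact congrArg rowI h12
  set e : Equiv.Perm (Fin r) :=
    Equiv.ofBijective _ ((Finite.injective_iff_bijective).1 hσinj) with he
  have heapp : ∀ j, e j = (hsur j).choose := fun j => rfl
  have hmat : gMatD Fq rowI rowOf colOf colJ
      = (1 : Matrix (Fin r) (Fin r) (KK Fq)).submatrix e id := by
    ext j i
    unfold gMatD
    rw [Matrix.of_apply, Matrix.submatrix_apply, id, Matrix.one_apply]
    by_cases hc : rowI i = gfunD rowOf colOf colJ j
    · have : e j = i := by
        rw [heapp]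
        exact (hrowI (hc.trans (hσspec j).symm)).symm
      rw [if_pos hc, if_pos this]
    · rw [if_neg hc, if_neg]
      intro hh
      apply hc
      rw [← hh, heapp]
      exact hσspec j
  rw [hmat, Matrix.det_permute e, Matrix.det_one, mul_one]
  rcases Int.units_eq_one_or (Equiv.Perm.sign e) with h | h <;> rw [h]
  · simp only [Units.val_one, Int.cast_one]
    exact absK_one Fq
  · simp only [Units.val_neg, Units.val_one, Int.cast_neg, Int.cast_one]
    rw [absK_neg]
    exact absK_one Fq

lemma det_alt_sum (rowI : Fin r → Fin d) (rowOf colOf : Fin s → Fin d)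
    (hcolOf : Function.Injective colOf) (colJ : Fin r → Fin d)
    (hcolJ : Function.Injective colJ) (u : KK Fq) :
    ∑ Tv : Finset (Fin s), (-1 : KK Fq) ^ (Tvᶜ.card) *
      Matrix.det (Matrix.of fun i j =>
        UmatD Fq rowOf colOf (fun p => if p ∈ Tv then u else 0) (rowI i) (colJ j))
    = if (∀ p : Fin s, ∃ j, colJ j = colOf p) then
        u ^ s * Matrix.det (gMatD Fq rowI rowOf colOf colJ) else 0 := by
  classical
  set DT : Finset (Fin r) → KK Fq := fun T => Matrix.det (Matrix.of
    (T.piecewise (wcolD Fq rowI rowOf colOf colJ) (acolD Fq rowI colJ))) with hDT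
  set PT : Finset (Fin r) → Finset (Fin s) := fun T =>
    Finset.univ.filter (fun p => ∃ j ∈ T, pvarD colOf colJ j = some p) with hPT
  have h1 : ∀ Tv : Finset (Fin s), (-1 : KK Fq) ^ (Tvᶜ.card) *
      Matrix.det (Matrix.of fun i j =>
        UmatD Fq rowOf colOf (fun p => if p ∈ Tv then u else 0) (rowI i) (colJ j))
      = ∑ T : Finset (Fin r), DT T *
          ((-1 : KK Fq) ^ (Tvᶜ.card) * ∏ j ∈ T,
            cvarD Fq colOf colJ (fun p => if p ∈ Tv then u else 0) j) := by
    intro Tv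
    rw [step1 Fq rowI rowOf colOf hcolOf colJ, Finset.mul_sum]
    refine Finset.sum_congr rfl fun T _ => ?_
    ring
  rw [Finset.sum_congr rfl (fun Tv _ => h1 Tv), Finset.sum_comm]
  have h2 : ∀ T : Finset (Fin r),
      (∑ Tv : Finset (Fin s), DT T * ((-1 : KK Fq) ^ (Tvᶜ.card) *
        ∏ j ∈ T, cvarD Fq colOf colJ (fun p => if p ∈ Tv then u else 0) j))
      = DT T * (if (∀ j ∈ T, (pvarD colOf colJ j).isSome) ∧ PT T = Finset.univ
          then u ^ T.card else 0) := by
    intro T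
    rw [← Finset.mul_sum]
    congr 1
    have hprod : ∀ Tv : Finset (Fin s),
        (∏ j ∈ T, cvarD Fq colOf colJ (fun p => if p ∈ Tv then u else 0) j)
        = if (∀ j ∈ T, ∃ p ∈ Tv, pvarD colOf colJ j = some p) then u ^ T.card else 0 := by
      intro Tv
      rw [Finset.prod_congr rfl (fun j _ => cvar_chi Fq colOf colJ Tv u j)]
      convert prod_ite_zero Fq T (fun j => ∃ p ∈ Tv, pvarD colOf colJ j = some p) u using 2
    by_cases hsome : ∀ j ∈ T, (pvarD colOf colJ j).isSome
    · have hiff : ∀ Tv : Finset (Fin s),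
          (∀ j ∈ T, ∃ p ∈ Tv, pvarD colOf colJ j = some p) ↔ PT T ⊆ Tv := by
        intro Tv
        constructor
        · intro h p hp
          rw [hPT, Finset.mem_filter] at hp
          obtain ⟨-, j, hjT, hj⟩ := hp
          obtain ⟨p', hp'Tv, hj'⟩ := h j hjT
          obtain rfl : p = p' := by rw [hj] at hj'; injection hj'
          exact hp'Tv
        · intro h j hjT
          obtain ⟨p, hp⟩ := Option.isSome_iff_exists.1 (hsome j hjT)
          exact ⟨p, h (by rw [hPT, Finset.mem_filter]; exact ⟨Finset.mem_univ p, j, hjT, hp⟩), hp⟩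
      calc ∑ Tv : Finset (Fin s), (-1 : KK Fq) ^ (Tvᶜ.card) *
            ∏ j ∈ T, cvarD Fq colOf colJ (fun p => if p ∈ Tv then u else 0) j
          = ∑ Tv : Finset (Fin s), (-1 : KK Fq) ^ (Tvᶜ.card) *
              (if PT T ⊆ Tv then u ^ T.card else 0) := by
            refine Finset.sum_congr rfl fun Tv _ => ?_
            rw [hprod Tv]
            congr 1
            by_cases hc : PT T ⊆ Tv
            · rw [if_pos ((hiff Tv).2 hc), if_pos hc]
            · rw [if_neg (fun hh => hc ((hiff Tv).1 hh)), if_neg hc]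
        _ = if PT T = Finset.univ then u ^ T.card else 0 := alt_sum_indicator Fq _ _
        _ = _ := if_congr (and_iff_right hsome).symm rfl rfl
    · rw [if_neg (fun hh => hsome hh.1)]
      refine Finset.sum_eq_zero fun Tv _ => ?_
      rw [hprod Tv, if_neg, mul_zero]
      intro hh
      apply hsome
      intro j hjT
      obtain ⟨p, -, hp⟩ := hh j hjT
      rw [hp]
      rfl
  rw [Finset.sum_congr rfl (fun T _ => h2 T)]
  by_cases hSC : ∀ p : Fin s, ∃ j, colJ j = colOf p
  · rw [if_pos hSC]
    set T₀ : Finset (Fin r) :=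
      Finset.univ.filter (fun j => (pvarD colOf colJ j).isSome) with hT₀
    have hT₀some : ∀ j ∈ T₀, (pvarD colOf colJ j).isSome := by
      intro j hj
      exact (Finset.mem_filter.1 hj).2
    have hPT₀ : PT T₀ = Finset.univ := by
      apply Finset.eq_univ_of_forall
      intro p
      rw [hPT, Finset.mem_filter]
      obtain ⟨j, hj⟩ := hSC p
      have hpv : pvarD colOf colJ j = some p := pvar_some' hcolOf hj.symm
      refine ⟨Finset.mem_univ p, j, ?_, hpv⟩
      rw [hT₀, Finset.mem_filter]
      exact ⟨Finset.mem_univ j, by rw [hpv]; rfl⟩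
    have hcard : T₀.card = s := by
      rw [← Fintype.card_fin s, ← Finset.card_univ]
      apply Finset.card_bij
        (fun j hj => (pvarD colOf colJ j).get (hT₀some j hj))
      · intro j hj
        exact Finset.mem_univ _
      · intro j1 hj1 j2 hj2 heq
        have e1 : pvarD colOf colJ j1 = some ((pvarD colOf colJ j1).get (hT₀some j1 hj1)) :=
          (Option.some_get _).symm
        have e2 : pvarD colOf colJ j2 = some ((pvarD colOf colJ j2).get (hT₀some j2 hj2)) :=
          (Option.some_get _).symm
        apply hcolJ
        rw [← pvar_some e1, ← pvar_some e2, heq]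
      · intro p hp
        obtain ⟨j, hj⟩ := hSC p
        have hpv : pvarD colOf colJ j = some p := pvar_some' hcolOf hj.symm
        have hjT₀ : j ∈ T₀ := by
          rw [hT₀, Finset.mem_filter]
          exact ⟨Finset.mem_univ j, by rw [hpv]; rfl⟩
        refine ⟨j, hjT₀, ?_⟩
        simp [hpv]
    have hDT₀ : DT T₀ = Matrix.det (gMatD Fq rowI rowOf colOf colJ) := by
      rw [hDT]
      show (Matrix.of (T₀.piecewise (wcolD Fq rowI rowOf colOf colJ) (acolD Fq rowI colJ))).det
        = (gMatD Fq rowI rowOf colOf colJ).det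
      congr 1
      refine Matrix.ext fun j i => ?_
      show (T₀.piecewise (wcolD Fq rowI rowOf colOf colJ) (acolD Fq rowI colJ)) j i
        = (if rowI i = gfunD rowOf colOf colJ j then (1 : KK Fq) else 0)
      by_cases hj : j ∈ T₀
      · rw [Finset.piecewise_eq_of_mem _ _ _ hj]
        obtain ⟨p, hp⟩ := Option.isSome_iff_exists.1 (hT₀some j hj)
        unfold wcolD gfunD eColD
        rw [hp]
        rfl
      · rw [Finset.piecewise_eq_of_notMem _ _ _ hj]
        have hnone : pvarD colOf colJ j = none := by
          by_contra hc
          exact hj (by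
            rw [hT₀, Finset.mem_filter]
            exact ⟨Finset.mem_univ j, Option.isSome_iff_ne_none.2 hc⟩)
        unfold acolD gfunD eColD
        rw [hnone]
        rfl
    rw [Finset.sum_eq_single T₀]
    · rw [if_pos ⟨hT₀some, hPT₀⟩, hDT₀, hcard, mul_comm]
    · intro T _ hTne
      rw [if_neg, mul_zero]
      rintro ⟨hTsome, hTPT⟩
      apply hTne
      apply Finset.Subset.antisymm
      · intro j hj
        rw [hT₀, Finset.mem_filter]
        exact ⟨Finset.mem_univ j, hTsome j hj⟩
      · intro j hj
        obtain ⟨p, hp⟩ := Option.isSome_iff_exists.1 (hT₀some j hj)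
        have hpPT : p ∈ PT T := by rw [hTPT]; exact Finset.mem_univ p
        rw [hPT, Finset.mem_filter] at hpPT
        obtain ⟨-, j', hj'T, hj'⟩ := hpPT
        have : colJ j = colJ j' := by rw [← pvar_some hp, ← pvar_some hj']
        rwa [hcolJ this]
    · intro hT₀univ
      exact absurd (Finset.mem_univ T₀) hT₀univ
  · rw [if_neg hSC]
    refine Finset.sum_eq_zero fun T _ => ?_
    rw [if_neg, mul_zero]
    rintro ⟨hTsome, hTPT⟩
    apply hSC
    intro p
    have hpPT : p ∈ PT T := by rw [hTPT]; exact Finset.mem_univ p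
    rw [hPT, Finset.mem_filter] at hpPT
    obtain ⟨-, j, -, hj⟩ := hpPT
    exact ⟨j, (pvar_some hj).symm⟩

end DetLemmas2


section BlockLemmas

lemma castAdd_ne_natAdd {m n : ℕ} (i : Fin m) (j : Fin n) :
    Fin.castAdd n i ≠ Fin.natAdd m j := by
  intro h
  have := congrArg Fin.val h
  simp only [Fin.coe_castAdd, Fin.coe_natAdd] at this
  omega

/-- matrix of variables placed at the matching positions, in `Fin m → Fin n` coordinates -/
def AmatD {m n s : ℕ} (rowOf colOf : Fin s → Fin (m + n)) (x : Fin s → KK Fq) :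
    Fin m → Fin n → KK Fq :=
  fun i j => ∑ p : Fin s,
    if rowOf p = Fin.castAdd n i ∧ colOf p = Fin.natAdd m j then x p else 0

lemma uA_eq_UmatD {m n s : ℕ} (rowOf colOf : Fin s → Fin (m + n))
    (hrow : ∀ p, ((rowOf p : Fin (m+n)) : ℕ) < m) (hcol : ∀ p, m ≤ ((colOf p : Fin (m+n)) : ℕ))
    (x : Fin s → KK Fq) :
    ((uA Fq (AmatD Fq rowOf colOf x) : G Fq (m + n)) : Matrix (Fin (m+n)) (Fin (m+n)) (KK Fq))
      = UmatD Fq rowOf colOf x := by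
  have hstd : ∀ (p : Fin s) (a b : Fin (m+n)),
      (x p • Matrix.single (rowOf p) (colOf p) (1 : KK Fq)) a b
        = if rowOf p = a ∧ colOf p = b then x p else 0 := by
    intro p a b
    rw [Matrix.smul_apply]
    unfold Matrix.single
    rw [Matrix.of_apply, smul_eq_mul, mul_ite, mul_one, mul_zero]
  have hrowsum0 : ∀ a b : Fin (m+n), m ≤ (a : ℕ) →
      ∑ p : Fin s, (x p • Matrix.single (rowOf p) (colOf p) (1 : KK Fq)) a b = 0 := by
    intro a b ha
    refine Finset.sum_eq_zero fun p _ => ?_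
    rw [hstd, if_neg]
    rintro ⟨h1, -⟩
    have := hrow p
    rw [h1] at this
    omega
  have hcolsum0 : ∀ a b : Fin (m+n), (b : ℕ) < m →
      ∑ p : Fin s, (x p • Matrix.single (rowOf p) (colOf p) (1 : KK Fq)) a b = 0 := by
    intro a b hb
    refine Finset.sum_eq_zero fun p _ => ?_
    rw [hstd, if_neg]
    rintro ⟨-, h2⟩
    have := hcol p
    rw [h2] at this
    omega
  refine Matrix.ext fun i j => ?_
  show ((Matrix.fromBlocks 1 (Matrix.of (AmatD Fq rowOf colOf x)) 0 1).submatrix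
      finSumFinEquiv.symm finSumFinEquiv.symm) i j = UmatD Fq rowOf colOf x i j
  rw [Matrix.submatrix_apply]
  unfold UmatD
  rw [Matrix.add_apply, Matrix.sum_apply]
  rcases hi : finSumFinEquiv.symm i with i₀ | i₀ <;> rcases hj : finSumFinEquiv.symm j with j₀ | j₀
  all_goals
    have hieq : i = _ := (Equiv.symm_apply_eq finSumFinEquiv).1 hi
    have hjeq : j = _ := (Equiv.symm_apply_eq finSumFinEquiv).1 hj
  · rw [Matrix.fromBlocks_apply₁₁]
    rw [finSumFinEquiv_apply_left] at hieq hjeq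
    subst hieq hjeq
    rw [hcolsum0 _ (Fin.castAdd n j₀) (by simp [Fin.coe_castAdd, Fin.is_lt]), add_zero, Matrix.one_apply,
      Matrix.one_apply]
    by_cases hc : i₀ = j₀
    · rw [if_pos hc, if_pos (by rw [hc])]
    · rw [if_neg hc, if_neg (fun hh => hc (Fin.castAdd_injective m n hh))]
  · rw [Matrix.fromBlocks_apply₁₂]
    rw [finSumFinEquiv_apply_left] at hieq
    rw [finSumFinEquiv_apply_right] at hjeq
    subst hieq hjeq
    rw [Matrix.one_apply_ne (castAdd_ne_natAdd i₀ j₀), zero_add, Matrix.of_apply]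
    unfold AmatD
    exact Finset.sum_congr rfl fun p _ => (hstd p _ _).symm
  · rw [Matrix.fromBlocks_apply₂₁]
    rw [finSumFinEquiv_apply_right] at hieq
    rw [finSumFinEquiv_apply_left] at hjeq
    subst hieq hjeq
    rw [Matrix.zero_apply, Matrix.one_apply_ne (Ne.symm (castAdd_ne_natAdd j₀ i₀)),
      hcolsum0 _ (Fin.castAdd n j₀) (by simp [Fin.coe_castAdd, Fin.is_lt]), add_zero]
  · rw [Matrix.fromBlocks_apply₂₂]
    rw [finSumFinEquiv_apply_right] at hieq hjeq
    subst hieq hjeq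
    rw [hrowsum0 (Fin.natAdd m i₀) _ (by simp [Fin.coe_natAdd]), add_zero, Matrix.one_apply, Matrix.one_apply]
    by_cases hc : i₀ = j₀
    · rw [if_pos hc, if_pos (by rw [hc])]
    · rw [if_neg hc, if_neg (fun hh => hc (by
        have hv := congrArg Fin.val hh
        simp only [Fin.coe_natAdd, add_right_inj] at hv
        exact Fin.ext hv))]

end BlockLemmas

section IsetConstruction

lemma wtVec_of_lt {m n : ℕ} (a : Fin (m + n) → ℕ) (x : Fin (m + n)) (hx : (x : ℕ) < m) :
    wtVec m n a x = (a x : ℤ) := by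
  have hxe : x = Fin.castAdd n ⟨(x : ℕ), hx⟩ := Fin.ext rfl
  rw [hxe]
  unfold wtVec
  rw [Fin.addCases_left]

lemma wtVec_of_ge {m n : ℕ} (a : Fin (m + n) → ℕ) (x : Fin (m + n)) (hx : m ≤ (x : ℕ)) :
    wtVec m n a x = -(a x : ℤ) := by
  have hlt : (x : ℕ) - m < n := by have := x.isLt; omega
  have hxe : x = Fin.natAdd m ⟨(x : ℕ) - m, hlt⟩ := Fin.ext (by simp [Fin.coe_natAdd]; omega)
  rw [hxe]
  unfold wtVec
  rw [Fin.addCases_right]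

lemma minWt_le {k : ℕ} (a : Fin k → ℕ) (i : Fin k) : minWt a ≤ a i := by
  unfold minWt
  exact ciInf_le (OrderBot.bddBelow _) i

lemma FS_eq (m n : ℕ) : Finset.univ.filter (fun x : Fin (m + n) => (x : ℕ) < m)
    = Finset.map ⟨Fin.castAdd n, Fin.castAdd_injective m n⟩ Finset.univ := by
  ext x
  simp only [Finset.mem_filter, Finset.mem_univ, true_and, Finset.mem_map,
    Function.Embedding.coeFn_mk]
  constructor
  · intro hx
    exact ⟨⟨(x : ℕ), hx⟩, Fin.ext rfl⟩
  · rintro ⟨i₀, rfl⟩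
    exact i₀.isLt

lemma LS_eq (m n : ℕ) : Finset.univ.filter (fun x : Fin (m + n) => ¬((x : ℕ) < m))
    = Finset.map ⟨Fin.natAdd m, fun x y hxy => by
        have hv := congrArg Fin.val hxy
        simp only [Fin.coe_natAdd, add_right_inj] at hv
        exact Fin.ext hv⟩ Finset.univ := by
  ext x
  simp only [Finset.mem_filter, Finset.mem_univ, true_and, Finset.mem_map,
    Function.Embedding.coeFn_mk]
  constructor
  · intro hx
    have hlt : (x : ℕ) - m < n := by have := x.isLt; omega
    exact ⟨⟨(x : ℕ) - m, hlt⟩, Fin.ext (by show m + ((x : ℕ) - m) = x; omega)⟩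
  · rintro ⟨j₀, rfl⟩
    show ¬(m + (j₀ : ℕ) < m); omega

lemma FS_card (m n : ℕ) :
    (Finset.univ.filter (fun x : Fin (m + n) => (x : ℕ) < m)).card = m := by
  rw [FS_eq, Finset.card_map, Finset.card_univ, Fintype.card_fin]

lemma LS_card (m n : ℕ) :
    (Finset.univ.filter (fun x : Fin (m + n) => ¬((x : ℕ) < m))).card = n := by
  rw [LS_eq, Finset.card_map, Finset.card_univ, Fintype.card_fin]

lemma exists_Iset (m n r : ℕ) (hm : 0 < m) (hn : 0 < n) (hr1 : 1 ≤ r) (hr2 : r ≤ m + n - 1)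
    (a : Fin (m + n) → ℕ)
    (hsum : ∑ i : Fin m, a (Fin.castAdd n i) = ∑ j : Fin n, a (Fin.natAdd m j))
    (Jset : Finset (Fin (m + n))) (hJcard : Jset.card = r) :
    ∃ Iset : Finset (Fin (m + n)), Iset.card = r ∧
      (∀ x ∈ Jset, (x : ℕ) < m → x ∈ Iset) ∧
      (∀ x ∈ Iset, m ≤ (x : ℕ) → x ∈ Jset) ∧
      ((minWt a : ℤ) ≤ ∑ i ∈ Iset, wtVec m n a i) := by
  classical
  have hmin_nonneg : (0 : ℤ) ≤ (minWt a : ℤ) := Int.ofNat_nonneg _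
  by_cases hrm : r ≤ m
  · set FS := Finset.univ.filter (fun x : Fin (m + n) => (x : ℕ) < m) with hFS
    have hJ1sub : Jset.filter (fun x : Fin (m + n) => (x : ℕ) < m) ⊆ FS := by
      intro x hx
      rw [Finset.mem_filter] at hx
      rw [hFS, Finset.mem_filter]
      exact ⟨Finset.mem_univ x, hx.2⟩
    have hJ1card : (Jset.filter (fun x : Fin (m + n) => (x : ℕ) < m)).card ≤ r :=
      le_trans (Finset.card_filter_le _ _) (le_of_eq hJcard)
    obtain ⟨Iset, h1, h2, h3⟩ := Finset.exists_subsuperset_card_eq hJ1sub hJ1card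
      (by rw [hFS, FS_card]; exact hrm)
    have hIFS : ∀ x ∈ Iset, (x : ℕ) < m := by
      intro x hx
      exact (Finset.mem_filter.1 (h2 hx)).2
    refine ⟨Iset, h3, ?_, ?_, ?_⟩
    · intro x hx hxm
      exact h1 (Finset.mem_filter.2 ⟨hx, hxm⟩)
    · intro x hx hxm
      exact absurd (hIFS x hx) (by omega)
    · have hterm : ∀ i ∈ Iset, (minWt a : ℤ) ≤ wtVec m n a i := by
        intro i hi
        rw [wtVec_of_lt a i (hIFS i hi)]
        exact_mod_cast minWt_le a i
      calc (minWt a : ℤ) ≤ (Iset.card : ℤ) * (minWt a : ℤ) := by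
            refine le_mul_of_one_le_left hmin_nonneg ?_
            rw [h3]; exact_mod_cast hr1
        _ ≤ ∑ i ∈ Iset, wtVec m n a i := by
            have := Finset.card_nsmul_le_sum Iset (wtVec m n a) ((minWt a : ℤ)) hterm
            rwa [nsmul_eq_mul] at this
  · push_neg at hrm
    set FS := Finset.univ.filter (fun x : Fin (m + n) => (x : ℕ) < m) with hFS
    set LS := Finset.univ.filter (fun x : Fin (m + n) => ¬((x : ℕ) < m)) with hLS
    set J2 := Jset.filter (fun x : Fin (m + n) => ¬((x : ℕ) < m)) with hJ2
    have hJsplit := Finset.card_filter_add_card_filter_not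
      (s := Jset) (p := fun x : Fin (m + n) => (x : ℕ) < m)
    have hJ1le : (Jset.filter (fun x : Fin (m + n) => (x : ℕ) < m)).card ≤ m := by
      have : Jset.filter (fun x : Fin (m + n) => (x : ℕ) < m) ⊆ FS := by
        intro x hx
        rw [Finset.mem_filter] at hx
        rw [hFS, Finset.mem_filter]
        exact ⟨Finset.mem_univ x, hx.2⟩
      calc _ ≤ FS.card := Finset.card_le_card this
        _ = m := by rw [hFS, FS_card]
    have hJ2ge : r - m ≤ J2.card := by
      rw [hJcard] at hJsplit
      have hfold : (Jset.filter (fun x : Fin (m + n) => ¬((x : ℕ) < m))).card = J2.card := rfl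
      omega
    obtain ⟨I₂, hI₂sub, hI₂card⟩ := Finset.exists_subset_card_eq (s := J2) (n := r - m) hJ2ge
    have hI₂ge : ∀ x ∈ I₂, ¬((x : ℕ) < m) := fun x hx =>
      (Finset.mem_filter.1 (hI₂sub hx)).2
    have hdisj : Disjoint FS I₂ := by
      rw [Finset.disjoint_left]
      intro x hx hx2
      exact hI₂ge x hx2 (Finset.mem_filter.1 hx).2
    refine ⟨FS ∪ I₂, ?_, ?_, ?_, ?_⟩
    · rw [Finset.card_union_of_disjoint hdisj, hFS, FS_card, hI₂card]
      omega
    · intro x hx hxm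
      exact Finset.mem_union_left _ (Finset.mem_filter.2 ⟨Finset.mem_univ x, hxm⟩)
    · intro x hx hxm
      rcases Finset.mem_union.1 hx with hx1 | hx2
      · exact absurd (Finset.mem_filter.1 hx1).2 (by omega)
      · exact (Finset.mem_filter.1 (hI₂sub hx2)).1
    · have hI₂LS : I₂ ⊆ LS := by
        intro x hx
        exact Finset.mem_filter.2 ⟨Finset.mem_univ x, hI₂ge x hx⟩
      have hsumFS : ∑ i ∈ FS, wtVec m n a i = ∑ x ∈ LS, (a x : ℤ) := by
        have e1 : ∑ i ∈ FS, wtVec m n a i = ∑ i ∈ FS, (a i : ℤ) :=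
          Finset.sum_congr rfl fun x hx => wtVec_of_lt a x (Finset.mem_filter.1 hx).2
        have e2 : ∑ i ∈ FS, (a i : ℤ) = ∑ i₀ : Fin m, (a (Fin.castAdd n i₀) : ℤ) := by
          rw [hFS, FS_eq, Finset.sum_map]
          rfl
        have e3 : ∑ x ∈ LS, (a x : ℤ) = ∑ j₀ : Fin n, (a (Fin.natAdd m j₀) : ℤ) := by
          rw [hLS, LS_eq, Finset.sum_map]
          rfl
        rw [e1, e2, e3]
        exact_mod_cast congrArg (Nat.cast : ℕ → ℤ) hsum
      have hsumI₂ : ∑ i ∈ I₂, wtVec m n a i = -∑ x ∈ I₂, (a x : ℤ) := by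
        rw [← Finset.sum_neg_distrib]
        exact Finset.sum_congr rfl fun x hx => wtVec_of_ge a x (by have := hI₂ge x hx; omega)
      rw [Finset.sum_union hdisj, hsumFS, hsumI₂,
        ← Finset.sum_sdiff hI₂LS (f := fun x => (a x : ℤ))]
      have hcard : 1 ≤ (LS \ I₂).card := by
        rw [Finset.card_sdiff_of_subset hI₂LS, hI₂card]
        have : LS.card = n := by rw [hLS, LS_card]
        omega
      have hterm : ∀ i ∈ LS \ I₂, (minWt a : ℤ) ≤ (a i : ℤ) := by
        intro i _
        exact_mod_cast minWt_le a i
      calc (minWt a : ℤ) ≤ ((LS \ I₂).card : ℤ) * (minWt a : ℤ) := by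
            refine le_mul_of_one_le_left hmin_nonneg ?_
            exact_mod_cast hcard
        _ ≤ ∑ i ∈ LS \ I₂, (a i : ℤ) := by
            have := Finset.card_nsmul_le_sum (LS \ I₂) (fun x => (a x : ℤ))
              ((minWt a : ℤ)) hterm
            rwa [nsmul_eq_mul] at this
        _ = ∑ i ∈ LS \ I₂, (a i : ℤ) + ∑ i ∈ I₂, (a i : ℤ) + -∑ i ∈ I₂, (a i : ℤ) := by ring

end IsetConstruction

/-- Lemma 2.4: there exists `β > 0` such that for every open
`‖·‖_∞`-ball `B` centered at `0` in `Mat_{m×n}(K)` there is `b > 0` such that for each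
`r = 1,…,d−1`, every `v ∈ ⋀^r K^d` and every `a ∈ 𝔞⁺`,
`sup_{A ∈ B} ‖σ(g_a u_A) v‖_∞ ≥ b·q^{β·min(a)}·‖v‖_∞`. -/
theorem sup_extPower_lower_bound
    (Fq : Type) [Field Fq] [Fintype Fq] (m n : ℕ) (hm : 0 < m) (hn : 0 < n)
    :
    ∃ β : ℝ, 0 < β ∧ ∀ ρ : ℝ, 0 < ρ → ∃ b : ℝ, 0 < b ∧
      ∀ r : ℕ, 1 ≤ r → r ≤ m + n - 1 →
      ∀ v : {s : Finset (Fin (m + n)) // s.card = r} → KK Fq,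
      ∀ (a : Fin (m + n) → ℕ), (∀ i, 0 < a i) →
      ∀ (hsum : ∑ i : Fin m, a (Fin.castAdd n i) = ∑ j : Fin n, a (Fin.natAdd m j)),
      ∃ A : Fin m → Fin n → KK Fq, A ∈ ballMat Fq m n ρ ∧
        b * (Fintype.card Fq : ℝ) ^ (β * (minWt a : ℝ)) * extNorm Fq v ≤
          extNorm Fq ((compound Fq
              (((ga Fq a hsum) * uA Fq A : G Fq (m + n)) :
                Matrix (Fin (m + n)) (Fin (m + n)) (KK Fq)) r).mulVec v) := by
  classical
  have hq1 : (1:ℝ) < (Fintype.card Fq : ℝ) := qgt1 Fq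
  have hq0 : (0:ℝ) < (Fintype.card Fq : ℝ) := qpos Fq
  refine ⟨1, one_pos, ?_⟩
  intro ρ hρ
  obtain ⟨k, hk⟩ := pow_unbounded_of_one_lt (1/ρ) hq1
  have hqk : (0:ℝ) < (Fintype.card Fq : ℝ) ^ (k:ℕ) := pow_pos hq0 k
  have huKρ : (Fintype.card Fq : ℝ) ^ (-(k:ℤ)) < ρ := by
    rw [_root_.zpow_neg, zpow_natCast]
    rw [one_div] at hk
    calc ((Fintype.card Fq : ℝ) ^ (k:ℕ))⁻¹ < (ρ⁻¹)⁻¹ :=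
          (inv_lt_inv₀ hqk (inv_pos.2 hρ)).2 hk
      _ = ρ := inv_inv ρ
  have huKle1 : (Fintype.card Fq : ℝ) ^ (-(k:ℤ)) ≤ 1 := by
    have := zpow_le_zpow_right₀ hq1.le (show (-(k:ℤ)) ≤ 0 by omega)
    simpa using this
  refine ⟨(Fintype.card Fq : ℝ) ^ (-((k*(m*n) : ℕ) : ℤ)), zpow_pos hq0 _, ?_⟩
  intro r hr1 hr2 v a hapos hsum
  have hrd : r ≤ m + n := le_trans hr2 (Nat.sub_le _ _)
  obtain ⟨s0, hs0sub, hs0card⟩ := Finset.exists_subset_card_eq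
    (s := (Finset.univ : Finset (Fin (m + n)))) (n := r)
    (by rw [Finset.card_univ, Fintype.card_fin]; exact hrd)
  haveI hne : Nonempty {s : Finset (Fin (m + n)) // s.card = r} := ⟨⟨s0, hs0card⟩⟩
  obtain ⟨Jst, hJmax⟩ : ∃ J0, ∀ J, absK Fq (v J) ≤ absK Fq (v J0) := by
    obtain ⟨J0, -, hJ0⟩ := Finset.exists_max_image Finset.univ (fun J => absK Fq (v J))
      ⟨Classical.arbitrary _, Finset.mem_univ _⟩
    exact ⟨J0, fun J => hJ0 J (Finset.mem_univ J)⟩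
  have hext_le : extNorm Fq v ≤ absK Fq (v Jst) := ciSup_le hJmax
  obtain ⟨Iset, hIcard, hIJ1, hI2J, hW⟩ := exists_Iset m n r hm hn hr1 hr2 a hsum Jst.1 Jst.2
  set Rows : Finset (Fin (m+n)) := Iset \ Jst.1 with hRows
  set Cols : Finset (Fin (m+n)) := Jst.1 \ Iset with hColsDef
  have hColscard : Cols.card = Rows.card := Finset.card_sdiff_comm (Jst.2.trans hIcard.symm)
  have hRowsFirst : ∀ x ∈ Rows, (x:ℕ) < m := by
    intro x hx
    rcases Finset.mem_sdiff.1 hx with ⟨hxI, hxJ⟩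
    by_contra h
    exact hxJ (hI2J x hxI (by omega))
  have hColsLast : ∀ x ∈ Cols, m ≤ (x:ℕ) := by
    intro x hx
    rcases Finset.mem_sdiff.1 hx with ⟨hxJ, hxI⟩
    by_contra h
    exact hxI (hIJ1 x hxJ (by omega))
  set rowOf : Fin Rows.card → Fin (m+n) :=
    fun p => ((Rows.orderIsoOfFin rfl) p : Fin (m+n)) with hrowOfDef
  set colOf : Fin Rows.card → Fin (m+n) :=
    fun p => ((Cols.orderIsoOfFin hColscard) p : Fin (m+n)) with hcolOfDef
  have hrowOfmem : ∀ p, rowOf p ∈ Rows := fun p => ((Rows.orderIsoOfFin rfl) p).2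
  have hcolOfmem : ∀ p, colOf p ∈ Cols := fun p => ((Cols.orderIsoOfFin hColscard) p).2
  have hrowOfinj : Function.Injective rowOf := fun p q h =>
    (Rows.orderIsoOfFin rfl).injective (Subtype.coe_injective h)
  have hcolOfinj : Function.Injective colOf := fun p q h =>
    (Cols.orderIsoOfFin hColscard).injective (Subtype.coe_injective h)
  have hrowOf_sur : ∀ x ∈ Rows, ∃ p, rowOf p = x := by
    intro x hx
    obtain ⟨p, hp⟩ := (Rows.orderIsoOfFin rfl).surjective ⟨x, hx⟩
    exact ⟨p, congrArg Subtype.val hp⟩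
  have hcolOf_sur : ∀ x ∈ Cols, ∃ p, colOf p = x := by
    intro x hx
    obtain ⟨p, hp⟩ := (Cols.orderIsoOfFin hColscard).surjective ⟨x, hx⟩
    exact ⟨p, congrArg Subtype.val hp⟩
  set rowI : Fin r → Fin (m+n) :=
    fun i => ((Iset.orderIsoOfFin hIcard) i : Fin (m+n)) with hrowIDef
  have hrowImem : ∀ i, rowI i ∈ Iset := fun i => ((Iset.orderIsoOfFin hIcard) i).2
  have hrowIinj : Function.Injective rowI := fun i j h =>
    (Iset.orderIsoOfFin hIcard).injective (Subtype.coe_injective h)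
  have hrowI_sur : ∀ x ∈ Iset, ∃ i, rowI i = x := by
    intro x hx
    obtain ⟨i, hi⟩ := (Iset.orderIsoOfFin hIcard).surjective ⟨x, hx⟩
    exact ⟨i, congrArg Subtype.val hi⟩
  set colJ : (J : {s : Finset (Fin (m + n)) // s.card = r}) → Fin r → Fin (m+n) :=
    fun J j => ((J.1.orderIsoOfFin J.2) j : Fin (m+n)) with hcolJDef
  have hcolJmem : ∀ J j, colJ J j ∈ J.1 := fun J j => ((J.1.orderIsoOfFin J.2) j).2
  have hcolJinj : ∀ J, Function.Injective (colJ J) := fun J i j h =>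
    (J.1.orderIsoOfFin J.2).injective (Subtype.coe_injective h)
  have hcolJ_sur : ∀ (J : {s : Finset (Fin (m + n)) // s.card = r}), ∀ x ∈ J.1,
      ∃ j, colJ J j = x := by
    intro J x hx
    obtain ⟨j, hj⟩ := (J.1.orderIsoOfFin J.2).surjective ⟨x, hx⟩
    exact ⟨j, congrArg Subtype.val hj⟩
  set uK : KK Fq := tElem Fq ^ (-(k:ℤ)) with huKDef
  set W : ℤ := ∑ i ∈ Iset, wtVec m n a i with hWDef
  set xT : Finset (Fin Rows.card) → (Fin Rows.card → KK Fq) :=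
    fun Tv => fun p => if p ∈ Tv then uK else 0 with hxTDef
  haveI hFmne : Nonempty (Fin m) := ⟨⟨0, hm⟩⟩
  haveI hFnne : Nonempty (Fin n) := ⟨⟨0, hn⟩⟩
  have habsuK : absK Fq uK = (Fintype.card Fq : ℝ) ^ (-(k:ℤ)) := absK_tzpow Fq _
  have hAball : ∀ Tv, AmatD Fq rowOf colOf (xT Tv) ∈ ballMat Fq m n ρ := by
    intro Tv
    have hentry : ∀ i j, absK Fq (AmatD Fq rowOf colOf (xT Tv) i j)
        ≤ (Fintype.card Fq : ℝ) ^ (-(k:ℤ)) := by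
      intro i j
      refine absK_sum_le Fq _ _ _ (le_of_lt (zpow_pos hq0 _)) ?_
      intro p _
      by_cases hc : rowOf p = Fin.castAdd n i ∧ colOf p = Fin.natAdd m j
      · rw [if_pos hc]
        show absK Fq (if p ∈ Tv then uK else 0) ≤ _
        by_cases hp : p ∈ Tv
        · rw [if_pos hp, habsuK]
        · rw [if_neg hp, absK_zero]
          exact le_of_lt (zpow_pos hq0 _)
      · rw [if_neg hc, absK_zero]
        exact le_of_lt (zpow_pos hq0 _)
    show normInfMat Fq _ < ρ
    unfold normInfMat
    refine lt_of_le_of_lt ?_ huKρ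
    refine ciSup_le fun i => ?_
    exact ciSup_le fun j => hentry i j
  set fI : (Fin Rows.card → KK Fq) → KK Fq := fun x =>
    (compound Fq (((ga Fq a hsum) * uA Fq (AmatD Fq rowOf colOf x) : G Fq (m + n)) :
      Matrix (Fin (m + n)) (Fin (m + n)) (KK Fq)) r).mulVec v ⟨Iset, hIcard⟩ with hfIDef
  have hfI : ∀ x, fI x = ∑ J : {s : Finset (Fin (m + n)) // s.card = r},
      (tElem Fq ^ W *
        Matrix.det (Matrix.of fun i j => UmatD Fq rowOf colOf x (rowI i) (colJ J j))) * v J := by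
    intro x
    rw [hfIDef]
    show ∑ J, compound Fq _ r ⟨Iset, hIcard⟩ J * v J = _
    refine Finset.sum_congr rfl fun J _ => ?_
    congr 1
    show Matrix.det (Matrix.of fun i j =>
        ((ga Fq a hsum * uA Fq (AmatD Fq rowOf colOf x) : G Fq (m + n)) :
          Matrix (Fin (m + n)) (Fin (m + n)) (KK Fq)) (rowI i) (colJ J j)) = _
    have hcoe : ((ga Fq a hsum * uA Fq (AmatD Fq rowOf colOf x) : G Fq (m + n)) :
        Matrix (Fin (m + n)) (Fin (m + n)) (KK Fq))
        = Matrix.diagonal (fun i => tElem Fq ^ wtVec m n a i) * UmatD Fq rowOf colOf x := by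
      rw [Matrix.SpecialLinearGroup.coe_mul,
        uA_eq_UmatD Fq rowOf colOf (fun p => hRowsFirst _ (hrowOfmem p))
          (fun p => hColsLast _ (hcolOfmem p)) x]
      rfl
    rw [hcoe]
    have hentry : ∀ i j, (Matrix.diagonal (fun i => tElem Fq ^ wtVec m n a i) *
        UmatD Fq rowOf colOf x) (rowI i) (colJ J j)
        = tElem Fq ^ wtVec m n a (rowI i) * UmatD Fq rowOf colOf x (rowI i) (colJ J j) := by
      intro i j
      rw [Matrix.diagonal_mul]
    calc Matrix.det (Matrix.of fun i j => (Matrix.diagonal (fun i => tElem Fq ^ wtVec m n a i) *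
          UmatD Fq rowOf colOf x) (rowI i) (colJ J j))
        = Matrix.det (Matrix.of fun i j => tElem Fq ^ wtVec m n a (rowI i) *
            (Matrix.of fun i j => UmatD Fq rowOf colOf x (rowI i) (colJ J j)) i j) := by
          congr 1
          ext i j
          rw [Matrix.of_apply, Matrix.of_apply, hentry i j, Matrix.of_apply]
      _ = (∏ i : Fin r, tElem Fq ^ wtVec m n a (rowI i)) *
            Matrix.det (Matrix.of fun i j => UmatD Fq rowOf colOf x (rowI i) (colJ J j)) :=
          Matrix.det_mul_column _ _
      _ = tElem Fq ^ W *
            Matrix.det (Matrix.of fun i j => UmatD Fq rowOf colOf x (rowI i) (colJ J j)) := by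
          congr 1
          rw [prod_zpow_eq Fq (tElem Fq) (tElem_ne_zero Fq) Finset.univ
            (fun i => wtVec m n a (rowI i))]
          congr 1
          rw [hWDef, ← Finset.sum_coe_sort Iset (wtVec m n a)]
          exact Fintype.sum_equiv (Iset.orderIsoOfFin hIcard).toEquiv _ _ (fun i => rfl)
  -- the J = Jst identification under nondegeneracy
  have hJEQ : ∀ J : {s : Finset (Fin (m + n)) // s.card = r},
      (∀ p, ∃ j, colJ J j = colOf p) →
      (∀ j, ∃ i, rowI i = gfunD rowOf colOf (colJ J) j) →
      Function.Injective (gfunD rowOf colOf (colJ J)) → J = Jst := by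
    intro J hSC hcov hinj
    apply Subtype.ext
    refine Finset.eq_of_subset_of_card_le ?_ (le_of_eq (Jst.2.trans J.2.symm))
    intro y hy
    obtain ⟨j, hj⟩ := hcolJ_sur J y hy
    rcases hpv : pvarD colOf (colJ J) j with _ | p
    · have hgf : gfunD rowOf colOf (colJ J) j = y := by
        unfold gfunD
        rw [hpv]
        exact hj
      obtain ⟨i, hi⟩ := hcov j
      have hyI : y ∈ Iset := by rw [← hgf, ← hi]; exact hrowImem i
      by_contra hyJst
      have hyRows : y ∈ Rows := Finset.mem_sdiff.2 ⟨hyI, hyJst⟩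
      obtain ⟨p, hp⟩ := hrowOf_sur y hyRows
      obtain ⟨j₂, hj₂⟩ := hSC p
      have hpv₂ : pvarD colOf (colJ J) j₂ = some p := pvar_some' hcolOfinj hj₂.symm
      have hgf₂ : gfunD rowOf colOf (colJ J) j₂ = rowOf p := by
        unfold gfunD
        rw [hpv₂]
        rfl
      have hjj : j = j₂ := hinj (by rw [hgf, hgf₂, hp])
      rw [hjj, hpv₂] at hpv
      simp at hpv
    · have hcp : colOf p = colJ J j := pvar_some hpv
      have : y ∈ Cols := by rw [← hj, ← hcp]; exact hcolOfmem p
      exact (Finset.mem_sdiff.1 this).1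
  -- surjectivity condition holds for Jst
  have hSCJst : ∀ p, ∃ j, colJ Jst j = colOf p := by
    intro p
    exact hcolJ_sur Jst (colOf p) ((Finset.mem_sdiff.1 (hcolOfmem p)).1)
  -- cover and injectivity for Jst
  have hcovJst : ∀ j, ∃ i, rowI i = gfunD rowOf colOf (colJ Jst) j := by
    intro j
    rcases hpv : pvarD colOf (colJ Jst) j with _ | p
    · have hgf : gfunD rowOf colOf (colJ Jst) j = colJ Jst j := by
        unfold gfunD; rw [hpv]; rfl
      rw [hgf]
      apply hrowI_sur
      by_contra hnI
      have : colJ Jst j ∈ Cols := Finset.mem_sdiff.2 ⟨hcolJmem Jst j, hnI⟩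
      obtain ⟨p, hp⟩ := hcolOf_sur _ this
      have := pvar_some' hcolOfinj hp
      rw [hpv] at this
      simp at this
    · have hgf : gfunD rowOf colOf (colJ Jst) j = rowOf p := by
        unfold gfunD; rw [hpv]; rfl
      rw [hgf]
      exact hrowI_sur _ (Finset.mem_sdiff.1 (hrowOfmem p)).1
  have hinjJst : Function.Injective (gfunD rowOf colOf (colJ Jst)) := by
    intro j1 j2 h12
    rcases hpv1 : pvarD colOf (colJ Jst) j1 with _ | p1 <;>
      rcases hpv2 : pvarD colOf (colJ Jst) j2 with _ | p2 <;>
      unfold gfunD at h12 <;> rw [hpv1, hpv2] at h12 <;> simp only [Option.elim_none,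
        Option.elim_some] at h12
    · exact hcolJinj Jst h12
    · exfalso
      have h1 : colJ Jst j1 ∈ Jst.1 := hcolJmem Jst j1
      have h2 : rowOf p2 ∉ Jst.1 := (Finset.mem_sdiff.1 (hrowOfmem p2)).2
      rw [h12] at h1
      exact h2 h1
    · exfalso
      have h1 : colJ Jst j2 ∈ Jst.1 := hcolJmem Jst j2
      have h2 : rowOf p1 ∉ Jst.1 := (Finset.mem_sdiff.1 (hrowOfmem p1)).2
      rw [← h12] at h1
      exact h2 h1
    · have hp : p1 = p2 := hrowOfinj h12
      apply hcolJinj Jst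
      rw [← pvar_some hpv1, ← pvar_some hpv2, hp]
  -- the alternating sum identity
  set S : KK Fq := ∑ Tv : Finset (Fin Rows.card), (-1 : KK Fq) ^ (Tvᶜ.card) * fI (xT Tv)
    with hSDef
  have hSval : S = (tElem Fq ^ W * v Jst) *
      (uK ^ Rows.card * Matrix.det (gMatD Fq rowI rowOf colOf (colJ Jst))) := by
    rw [hSDef]
    calc ∑ Tv : Finset (Fin Rows.card), (-1 : KK Fq) ^ (Tvᶜ.card) * fI (xT Tv)
        = ∑ Tv : Finset (Fin Rows.card), ∑ J : {s : Finset (Fin (m + n)) // s.card = r},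
            (tElem Fq ^ W * v J) * ((-1 : KK Fq) ^ (Tvᶜ.card) *
              Matrix.det (Matrix.of fun i j =>
                UmatD Fq rowOf colOf (xT Tv) (rowI i) (colJ J j))) := by
          refine Finset.sum_congr rfl fun Tv _ => ?_
          rw [hfI (xT Tv), Finset.mul_sum]
          refine Finset.sum_congr rfl fun J _ => ?_
          ring
      _ = ∑ J : {s : Finset (Fin (m + n)) // s.card = r}, (tElem Fq ^ W * v J) *
            (∑ Tv : Finset (Fin Rows.card), (-1 : KK Fq) ^ (Tvᶜ.card) *
              Matrix.det (Matrix.of fun i j =>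
                UmatD Fq rowOf colOf (xT Tv) (rowI i) (colJ J j))) := by
          rw [Finset.sum_comm]
          refine Finset.sum_congr rfl fun J _ => ?_
          rw [Finset.mul_sum]
      _ = (tElem Fq ^ W * v Jst) *
            (uK ^ Rows.card * Matrix.det (gMatD Fq rowI rowOf colOf (colJ Jst))) := by
          rw [Finset.sum_eq_single Jst]
          · rw [det_alt_sum Fq rowI rowOf colOf hcolOfinj (colJ Jst) (hcolJinj Jst) uK,
              if_pos hSCJst]
          · intro J _ hJne
            rw [det_alt_sum Fq rowI rowOf colOf hcolOfinj (colJ J) (hcolJinj J) uK]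
            by_cases hSC : ∀ p : Fin Rows.card, ∃ j, colJ J j = colOf p
            · rw [if_pos hSC]
              by_cases hcov : ∀ j, ∃ i, rowI i = gfunD rowOf colOf (colJ J) j
              · by_cases hinj : Function.Injective (gfunD rowOf colOf (colJ J))
                · exact absurd (hJEQ J hSC hcov hinj) hJne
                · rw [gdet_zero_inj Fq rowI rowOf colOf (colJ J) hinj, mul_zero, mul_zero]
              · push_neg at hcov
                obtain ⟨j, hj⟩ := hcov
                rw [gdet_zero_row Fq rowI rowOf colOf (colJ J) ⟨j, hj⟩, mul_zero, mul_zero]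
            · rw [if_neg hSC, mul_zero]
          · intro hJst
            exact absurd (Finset.mem_univ Jst) hJst
  -- absolute value of S
  have habsdet : absK Fq (Matrix.det (gMatD Fq rowI rowOf colOf (colJ Jst))) = 1 :=
    gdet_abs_one Fq rowI hrowIinj rowOf colOf (colJ Jst) hinjJst hcovJst
  have habsS : absK Fq S = (Fintype.card Fq : ℝ) ^ W *
      (Fintype.card Fq : ℝ) ^ (-(k:ℤ) * (Rows.card : ℤ)) * absK Fq (v Jst) := by
    rw [hSval, absK_mul, absK_mul, absK_mul]
    rw [absK_tzpow, habsdet, mul_one]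
    have huKpow : uK ^ Rows.card = tElem Fq ^ (-(k:ℤ) * (Rows.card : ℤ)) := by
      rw [huKDef, ← zpow_natCast (tElem Fq ^ (-(k:ℤ))) Rows.card, ← _root_.zpow_mul]
    rw [huKpow, absK_tzpow]
    ring
  -- pick the maximizing Tv
  obtain ⟨Tvm, -, hTvm⟩ := Finset.exists_max_image
    (Finset.univ : Finset (Finset (Fin Rows.card))) (fun Tv => absK Fq (fI (xT Tv)))
    Finset.univ_nonempty
  have habs_neg_pow : ∀ (c : ℕ) (z : KK Fq), absK Fq ((-1 : KK Fq) ^ c * z) = absK Fq z := by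
    intro c z
    rw [absK_mul]
    have habs1 : absK Fq ((-1 : KK Fq) ^ c) = 1 := by
      induction c with
      | zero => rw [pow_zero]; exact absK_one Fq
      | succ c ih => rw [pow_succ, absK_mul, ih, one_mul, absK_neg]; exact absK_one Fq
    rw [habs1, one_mul]
  have hSle : absK Fq S ≤ absK Fq (fI (xT Tvm)) := by
    rw [hSDef]
    refine absK_sum_le Fq _ _ _ (absK_nonneg Fq _) ?_
    intro Tv _
    rw [habs_neg_pow]
    exact hTvm Tv (Finset.mem_univ Tv)
  -- conclude
  refine ⟨AmatD Fq rowOf colOf (xT Tvm), hAball Tvm, ?_⟩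
  have hcoord : absK Fq (fI (xT Tvm)) ≤ extNorm Fq ((compound Fq
      (((ga Fq a hsum) * uA Fq (AmatD Fq rowOf colOf (xT Tvm)) : G Fq (m + n)) :
        Matrix (Fin (m + n)) (Fin (m + n)) (KK Fq)) r).mulVec v) := by
    refine le_trans (le_of_eq ?_) (le_ciSup (f := fun I => absK Fq (((compound Fq
      (((ga Fq a hsum) * uA Fq (AmatD Fq rowOf colOf (xT Tvm)) : G Fq (m + n)) :
        Matrix (Fin (m + n)) (Fin (m + n)) (KK Fq)) r).mulVec v) I))
      (Set.Finite.bddAbove (Set.finite_range _)) ⟨Iset, hIcard⟩)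
    rfl
  refine le_trans ?_ (le_trans hSle hcoord)
  rw [habsS]
  -- exponent bookkeeping
  have hscard_le : Rows.card ≤ m * n := by
    have h1 : Rows.card ≤ r := by
      rw [← hIcard]
      exact Finset.card_le_card (Finset.sdiff_subset)
    obtain ⟨m', rfl⟩ : ∃ m', m = m' + 1 := ⟨m - 1, by omega⟩
    obtain ⟨n', rfl⟩ : ∃ n', n = n' + 1 := ⟨n - 1, by omega⟩
    have h2 : (m' + 1) * (n' + 1) = m' * n' + m' + n' + 1 := by ring
    omega
  have hmono : ∀ {x y : ℤ}, x ≤ y →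
      (Fintype.card Fq : ℝ) ^ x ≤ (Fintype.card Fq : ℝ) ^ y :=
    fun hxy => zpow_le_zpow_right₀ hq1.le hxy
  have hb1 : (Fintype.card Fq : ℝ) ^ (-((k*(m*n) : ℕ) : ℤ))
      ≤ (Fintype.card Fq : ℝ) ^ (-(k:ℤ) * (Rows.card : ℤ)) := by
    apply hmono
    have : (k:ℤ) * (Rows.card : ℤ) ≤ ((k*(m*n) : ℕ) : ℤ) := by
      push_cast
      have : (Rows.card : ℤ) ≤ ((m*n : ℕ) : ℤ) := by exact_mod_cast hscard_le
      nlinarith [Int.ofNat_nonneg k]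
    linarith [this]
  have hb2 : (Fintype.card Fq : ℝ) ^ ((minWt a : ℕ) : ℤ) ≤ (Fintype.card Fq : ℝ) ^ W :=
    hmono hW
  have hrpow : (Fintype.card Fq : ℝ) ^ ((1:ℝ) * (minWt a : ℝ))
      = (Fintype.card Fq : ℝ) ^ ((minWt a : ℕ) : ℤ) := by
    rw [one_mul]
    rw [show ((minWt a : ℕ) : ℝ) = (((minWt a : ℕ) : ℤ) : ℝ) by push_cast; ring]
    rw [Real.rpow_intCast]
  rw [hrpow]
  calc (Fintype.card Fq : ℝ) ^ (-((k*(m*n) : ℕ) : ℤ)) *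
        (Fintype.card Fq : ℝ) ^ ((minWt a : ℕ) : ℤ) * extNorm Fq v
      ≤ (Fintype.card Fq : ℝ) ^ (-(k:ℤ) * (Rows.card : ℤ)) *
        (Fintype.card Fq : ℝ) ^ W * absK Fq (v Jst) := by
        have h0 : (0:ℝ) ≤ extNorm Fq v := by
          have hle := le_ciSup (Set.Finite.bddAbove
            (Set.finite_range (fun J => absK Fq (v J)))) Jst
          exact le_trans (absK_nonneg Fq (v Jst)) hle
        exact mul_le_mul (mul_le_mul hb1 hb2 (le_of_lt (zpow_pos hq0 _))
          (le_of_lt (zpow_pos hq0 _))) hext_le h0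
          (mul_nonneg (le_of_lt (zpow_pos hq0 _)) (le_of_lt (zpow_pos hq0 _)))
    _ = (Fintype.card Fq : ℝ) ^ W *
        (Fintype.card Fq : ℝ) ^ (-(k:ℤ) * (Rows.card : ℤ)) * absK Fq (v Jst) := by ring


end PaperKL
end
end

section
/- Let (Y,ν) be a probability space, q > 1, C > 0, δ > 0, and let F: Y × ℤ_{≥0} → ℝ be measurable with F(·,i) ∈ L²(ν) for each i, satisfying |∫_Y F(y,i)F(y,j) dν(y)| ≤ C·q^{−δ·min(i, j−i)} for all integers 0 ≤ i ≤ j. Then for all integers 0 ≤ b ≤ c: ∫_Y (Σ_{i=b}^{c−1} F(y,i))² dν(y) ≤ 4C(c−b)/(1−q^{−δ}). -/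
open MeasureTheory Finset

/-- Lemma 3.6, Kleinbock–Shi–Weiss: if `(Y,ν)` is a probability space and
`F : Y × ℤ_{≥0} → ℝ` satisfies `|∫_Y F(y,i)F(y,j) dν| ≤ C·q^{−δ·min(i,j−i)}` for all
`0 ≤ i ≤ j`, then for all `0 ≤ b ≤ c`:
`∫_Y (Σ_{i=b}^{c−1} F(y,i))² dν ≤ 4C(c−b)/(1−q^{−δ})`. -/
theorem integral_sq_sum_le_of_correlation_bound
    {Y : Type*} [MeasurableSpace Y] (ν : Measure Y) [IsProbabilityMeasure ν]
    (q C δ : ℝ) (hq : 1 < q) (hC : 0 < C) (hδ : 0 < δ)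
    (F : Y → ℕ → ℝ) (hFmeas : ∀ i : ℕ, Measurable fun y => F y i)
    (hFL2 : ∀ i : ℕ, MemLp (fun y => F y i) 2 ν)
    (hcorr : ∀ i j : ℕ, i ≤ j →
      |∫ y, F y i * F y j ∂ν| ≤ C * q ^ (-(δ * ((min i (j - i) : ℕ) : ℝ))))
    (b c : ℕ) (hbc : b ≤ c) :
    ∫ y, (∑ i ∈ Finset.Ico b c, F y i) ^ 2 ∂ν
      ≤ 4 * C * ((c : ℝ) - (b : ℝ)) / (1 - q ^ (-δ)) := by
  set S := Finset.Ico b c with hS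
  set r : ℝ := q ^ (-δ) with hr
  have hq0 : (0:ℝ) < q := lt_trans one_pos hq
  have hr0 : 0 < r := Real.rpow_pos_of_pos hq0 _
  have hr1 : r < 1 := Real.rpow_lt_one_of_one_lt_of_neg hq (by linarith)
  have h1r : (0:ℝ) < 1 - r := by linarith
  have hcorr' : ∀ i j : ℕ, i ≤ j →
      |∫ y, F y i * F y j ∂ν| ≤ C * r ^ (min i (j - i)) := by
    intro i j hij
    refine (hcorr i j hij).trans (le_of_eq ?_)
    congr 1
    rw [hr, ← Real.rpow_natCast (q ^ (-δ)), ← Real.rpow_mul hq0.le]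
    congr 1
    ring
  have hInt : ∀ i j : ℕ, Integrable (fun y => F y i * F y j) ν := by
    intro i j
    have h := ((hFL2 j).smul (hFL2 i) (p := 2) (q := 2) (r := 1)
      (hpqr := ⟨by simp [one_div, ENNReal.inv_two_add_inv_two]⟩))
    exact memLp_one_iff_integrable.mp h
  have hexp : ∫ y, (∑ i ∈ S, F y i) ^ 2 ∂ν
      = ∑ i ∈ S, ∑ j ∈ S, ∫ y, F y i * F y j ∂ν := by
    have h1 : ∀ y, (∑ i ∈ S, F y i) ^ 2 = ∑ i ∈ S, ∑ j ∈ S, F y i * F y j := by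
      intro y; rw [sq, Finset.sum_mul_sum]
    simp_rw [h1]
    rw [integral_finset_sum _ (fun i _ => integrable_finset_sum _ (fun j _ => hInt i j))]
    exact Finset.sum_congr rfl fun i _ =>
      integral_finset_sum _ (fun j _ => hInt i j)
  set g : ℕ → ℕ → ℝ := fun i j => if i ≤ j then C * r ^ (min i (j - i)) else 0 with hg
  have hg0 : ∀ i j, 0 ≤ g i j := by
    intro i j
    simp only [hg]
    split
    · positivity
    · exact le_refl 0
  have ha : ∀ i j : ℕ, ∫ y, F y i * F y j ∂ν ≤ g i j + g j i := by
    intro i j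
    rcases le_total i j with h | h
    · have h1 : ∫ y, F y i * F y j ∂ν ≤ g i j := by
        simp only [hg, if_pos h]
        exact (le_abs_self _).trans (hcorr' i j h)
      linarith [hg0 j i]
    · have h1 : ∫ y, F y i * F y j ∂ν ≤ g j i := by
        have heq : ∫ y, F y i * F y j ∂ν = ∫ y, F y j * F y i ∂ν := by
          simp_rw [mul_comm]
        rw [heq]
        simp only [hg, if_pos h]
        exact (le_abs_self _).trans (hcorr' j i h)
      linarith [hg0 i j]
  have hgeo : ∀ n : ℕ, ∑ i ∈ Finset.range n, r ^ i ≤ 1 / (1 - r) := by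
    intro n
    rw [geom_sum_eq hr1.ne n]
    have heq : (r ^ n - 1) / (r - 1) = (1 - r ^ n) / (1 - r) := by
      rw [← neg_div_neg_eq]; ring_nf
    rw [heq]
    have hp : (0:ℝ) ≤ r ^ n := pow_nonneg hr0.le n
    gcongr
    linarith
  have hinner : ∀ j : ℕ, ∑ i ∈ S, g i j ≤ 2 * C / (1 - r) := by
    intro j
    calc ∑ i ∈ S, g i j
        = ∑ i ∈ S.filter (fun i => i ≤ j), C * r ^ (min i (j - i)) := by
          rw [Finset.sum_filter]
      _ ≤ ∑ i ∈ S.filter (fun i => i ≤ j), C * (r ^ i + r ^ (j - i)) := by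
          refine Finset.sum_le_sum fun i _ => ?_
          refine mul_le_mul_of_nonneg_left ?_ hC.le
          rcases min_choice i (j - i) with hm | hm <;> rw [hm] <;>
            nlinarith [pow_nonneg hr0.le i, pow_nonneg hr0.le (j - i)]
      _ ≤ ∑ i ∈ Finset.range (j + 1), C * (r ^ i + r ^ (j - i)) := by
          apply Finset.sum_le_sum_of_subset_of_nonneg
          · intro i hi
            simp only [Finset.mem_filter, hS, Finset.mem_Ico, Finset.mem_range] at hi ⊢
            omega
          · intro i _ _
            positivity
      _ = 2 * C * ∑ i ∈ Finset.range (j + 1), r ^ i := by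
          simp_rw [mul_add]
          rw [Finset.sum_add_distrib]
          have hrefl := Finset.sum_range_reflect (fun i => C * r ^ i) (j + 1)
          simp only [Nat.add_sub_cancel] at hrefl
          rw [← Finset.mul_sum, ← Finset.mul_sum] at *
          rw [hrefl]
          ring
      _ ≤ 2 * C * (1 / (1 - r)) := by
          refine mul_le_mul_of_nonneg_left (hgeo (j + 1)) (by positivity)
      _ = 2 * C / (1 - r) := by ring
  calc ∫ y, (∑ i ∈ S, F y i) ^ 2 ∂ν
      = ∑ i ∈ S, ∑ j ∈ S, ∫ y, F y i * F y j ∂ν := hexp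
    _ ≤ ∑ i ∈ S, ∑ j ∈ S, (g i j + g j i) :=
        Finset.sum_le_sum fun i _ => Finset.sum_le_sum fun j _ => ha i j
    _ = (∑ i ∈ S, ∑ j ∈ S, g i j) + ∑ i ∈ S, ∑ j ∈ S, g j i := by
        simp_rw [Finset.sum_add_distrib]
    _ = 2 * ∑ j ∈ S, ∑ i ∈ S, g i j := by
        rw [Finset.sum_comm (s := S) (t := S) (f := fun i j => g i j)]
        ring
    _ ≤ 2 * ∑ _j ∈ S, (2 * C / (1 - r)) := by
        have h2 := Finset.sum_le_sum fun j (_ : j ∈ S) => hinner j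
        linarith
    _ = 2 * (S.card : ℝ) * (2 * C / (1 - r)) := by
        rw [Finset.sum_const, nsmul_eq_mul]; ring
    _ = 4 * C * ((c : ℝ) - (b : ℝ)) / (1 - r) := by
        rw [hS, Nat.card_Ico, Nat.cast_sub hbc]
        field_simp
        ring
end

section
/- Let (Y,ν) be a probability space, q > 1, C > 0, δ > 0, and let F: Y × ℤ_{≥0} → ℝ be measurable with F(·,i) ∈ L²(ν) for each i, satisfying |∫_Y F(y,i)F(y,j) dν(y)| ≤ C·q^{−δ·min(i, j−i)} for all integers 0 ≤ i ≤ j. For s ∈ ℕ, let L_s be the collection of intervals [2^k·l, 2^k·(l+1)) ∩ ℤ_{≥0} with integers 0 ≤ k ≤ s−1 and 0 ≤ l ≤ 2^{s−k}−1. Then Σ_{[b,c) ∈ L_s} ∫_Y (Σ_{i=b}^{c−1} F(y,i))² dν(y) ≤ 4C·s·2^s/(1−q^{−δ}). -/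
open MeasureTheory Finset

private lemma geom_bound {r : ℝ} (h0 : 0 ≤ r) (h1 : r < 1) (n : ℕ) :
    ∑ d ∈ Finset.range n, r ^ d ≤ 1 / (1 - r) := by
  have hpos : 0 < 1 - r := by linarith
  have heq : (∑ d ∈ Finset.range n, r ^ d) * (1 - r) = 1 - r ^ n := by
    linear_combination -(geom_sum_mul r n)
  rw [le_div_iff₀ hpos, heq]
  have : 0 ≤ r ^ n := pow_nonneg h0 n
  linarith

private lemma sum_dist_le {r : ℝ} (h0 : 0 ≤ r) (h1 : r < 1) (i b c : ℕ) :
    ∑ j ∈ Finset.Ico b c, r ^ (Nat.dist i j) ≤ 2 / (1 - r) := by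
  set N := max c (i + 1) with hN
  have hsub : ∑ j ∈ Finset.Ico b c, r ^ (Nat.dist i j)
      ≤ ∑ j ∈ Finset.range N, r ^ (Nat.dist i j) := by
    apply Finset.sum_le_sum_of_subset_of_nonneg
    · intro j hj
      simp only [Finset.mem_Ico, Finset.mem_range] at *
      omega
    · intros
      positivity
  have hiN : i ≤ N := le_trans (Nat.le_succ i) (le_max_right _ _)
  have hsplit : ∑ j ∈ Finset.range N, r ^ Nat.dist i j
      = ∑ j ∈ Finset.range i, r ^ Nat.dist i j + ∑ j ∈ Finset.Ico i N, r ^ Nat.dist i j := by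
    rw [Finset.range_eq_Ico, Finset.range_eq_Ico]
    exact (Finset.sum_Ico_consecutive (fun j => r ^ Nat.dist i j) (Nat.zero_le i) hiN).symm
  have h1sum : ∑ j ∈ Finset.range i, r ^ Nat.dist i j ≤ 1 / (1 - r) := by
    have hrefl : ∑ j ∈ Finset.range i, r ^ Nat.dist i j
        = ∑ j ∈ Finset.range i, r ^ (j + 1) := by
      rw [← Finset.sum_range_reflect (fun j => r ^ (j + 1)) i]
      apply Finset.sum_congr rfl
      intro j hj
      simp only [Finset.mem_range] at hj
      congr 1
      simp only [Nat.dist]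
      omega
    rw [hrefl]
    calc ∑ j ∈ Finset.range i, r ^ (j + 1)
        ≤ ∑ j ∈ Finset.range i, r ^ j :=
          Finset.sum_le_sum fun j _ =>
            pow_le_pow_of_le_one h0 h1.le (Nat.le_succ j)
      _ ≤ 1 / (1 - r) := geom_bound h0 h1 i
  have h2sum : ∑ j ∈ Finset.Ico i N, r ^ Nat.dist i j ≤ 1 / (1 - r) := by
    have : ∑ j ∈ Finset.Ico i N, r ^ Nat.dist i j
        = ∑ d ∈ Finset.range (N - i), r ^ d := by
      rw [Finset.sum_Ico_eq_sum_range]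
      apply Finset.sum_congr rfl
      intro d _
      congr 1
      simp only [Nat.dist]
      omega
    rw [this]
    exact geom_bound h0 h1 _
  calc ∑ j ∈ Finset.Ico b c, r ^ (Nat.dist i j)
      ≤ ∑ j ∈ Finset.range N, r ^ (Nat.dist i j) := hsub
    _ = _ := hsplit
    _ ≤ 1 / (1 - r) + 1 / (1 - r) := add_le_add h1sum h2sum
    _ = 2 / (1 - r) := by ring

private lemma interval_int_bound {Y : Type*} [MeasurableSpace Y] (ν : Measure Y)
    [IsProbabilityMeasure ν] (C r : ℝ) (hC : 0 < C) (hr0 : 0 ≤ r) (hr1 : r < 1)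
    (F : Y → ℕ → ℝ) (hFL2 : ∀ i : ℕ, MemLp (fun y => F y i) 2 ν)
    (hcorr : ∀ i j : ℕ, i ≤ j →
      |∫ y, F y i * F y j ∂ν| ≤ C * r ^ (min i (j - i)))
    (b c : ℕ) :
    ∫ y, (∑ i ∈ Finset.Ico b c, F y i) ^ 2 ∂ν
      ≤ 4 * C * ((c - b : ℕ) : ℝ) / (1 - r) := by
  have h1r : 0 < 1 - r := by linarith
  -- integrability of products
  have hint : ∀ i j : ℕ, Integrable (fun y => F y i * F y j) ν := by
    intro i j
    have h := (hFL2 j).smul (hFL2 i) (r := 1)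
    rw [memLp_one_iff_integrable] at h
    exact h
  -- expand the square
  have hexp : ∫ y, (∑ i ∈ Finset.Ico b c, F y i) ^ 2 ∂ν
      = ∑ i ∈ Finset.Ico b c, ∑ j ∈ Finset.Ico b c, ∫ y, F y i * F y j ∂ν := by
    have hfun : ∀ y, (∑ i ∈ Finset.Ico b c, F y i) ^ 2
        = ∑ i ∈ Finset.Ico b c, ∑ j ∈ Finset.Ico b c, F y i * F y j := by
      intro y
      rw [sq, Finset.sum_mul_sum]
    simp only [hfun]
    rw [integral_finset_sum _
      (fun i _ => integrable_finset_sum _ (fun j _ => hint i j))]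
    exact Finset.sum_congr rfl fun i _ =>
      integral_finset_sum _ fun j _ => hint i j
  -- pointwise bound on correlations
  have key : ∀ i j : ℕ, i ≤ j →
      r ^ (min i (j - i)) ≤ r ^ (Nat.dist i j) + r ^ i + r ^ j := by
    intro i j h
    have hd : Nat.dist i j = j - i := Nat.dist_eq_sub_of_le h
    have h1 : (0:ℝ) ≤ r ^ Nat.dist i j := pow_nonneg hr0 _
    have h2 : (0:ℝ) ≤ r ^ i := pow_nonneg hr0 _
    have h3 : (0:ℝ) ≤ r ^ j := pow_nonneg hr0 _
    rcases le_total i (j - i) with h' | h'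
    · rw [min_eq_left h']
      linarith
    · rw [min_eq_right h', ← hd]
      linarith
  have hB : ∀ i j : ℕ, |∫ y, F y i * F y j ∂ν|
      ≤ C * (r ^ (Nat.dist i j) + r ^ i + r ^ j) := by
    intro i j
    rcases le_total i j with h | h
    · exact (hcorr i j h).trans (mul_le_mul_of_nonneg_left (key i j h) hC.le)
    · have heq : (∫ y, F y i * F y j ∂ν) = ∫ y, F y j * F y i ∂ν := by
        apply integral_congr_ae
        filter_upwards with y
        ring
      rw [heq]
      have hk := key j i h
      rw [Nat.dist_comm j i] at hk
      refine (hcorr j i h).trans (mul_le_mul_of_nonneg_left (hk.trans ?_) hC.le)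
      exact le_of_eq (by ring)
  set n : ℝ := ((c - b : ℕ) : ℝ) with hn
  have hcard : ((Finset.Ico b c).card : ℝ) = n := by rw [Nat.card_Ico]
  have hnn : 0 ≤ n := Nat.cast_nonneg _
  have hgeo : ∑ i ∈ Finset.Ico b c, r ^ i ≤ 1 / (1 - r) := by
    calc ∑ i ∈ Finset.Ico b c, r ^ i ≤ ∑ i ∈ Finset.range c, r ^ i := by
          apply Finset.sum_le_sum_of_subset_of_nonneg
          · intro x hx
            simp only [Finset.mem_Ico, Finset.mem_range] at *
            omega
          · intros
            positivity
      _ ≤ 1 / (1 - r) := geom_bound hr0 hr1 c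
  have hA : ∑ i ∈ Finset.Ico b c, ∑ j ∈ Finset.Ico b c, r ^ Nat.dist i j
      ≤ n * (2 / (1 - r)) := by
    calc ∑ i ∈ Finset.Ico b c, ∑ j ∈ Finset.Ico b c, r ^ Nat.dist i j
        ≤ ∑ _i ∈ Finset.Ico b c, 2 / (1 - r) :=
          Finset.sum_le_sum fun i _ => sum_dist_le hr0 hr1 i b c
      _ = n * (2 / (1 - r)) := by rw [Finset.sum_const, nsmul_eq_mul, hcard]
  have hBsum : ∑ i ∈ Finset.Ico b c, ∑ j ∈ Finset.Ico b c, r ^ i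
      ≤ n * (1 / (1 - r)) := by
    have : ∑ i ∈ Finset.Ico b c, ∑ _j ∈ Finset.Ico b c, r ^ i
        = n * ∑ i ∈ Finset.Ico b c, r ^ i := by
      simp only [Finset.sum_const, nsmul_eq_mul, hcard]
      rw [Finset.mul_sum]
    rw [this]
    exact mul_le_mul_of_nonneg_left hgeo hnn
  have hCsum : ∑ _i ∈ Finset.Ico b c, ∑ j ∈ Finset.Ico b c, r ^ j
      ≤ n * (1 / (1 - r)) := by
    rw [Finset.sum_const, nsmul_eq_mul, hcard]
    exact mul_le_mul_of_nonneg_left hgeo hnn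
  calc ∫ y, (∑ i ∈ Finset.Ico b c, F y i) ^ 2 ∂ν
      = ∑ i ∈ Finset.Ico b c, ∑ j ∈ Finset.Ico b c, ∫ y, F y i * F y j ∂ν := hexp
    _ ≤ ∑ i ∈ Finset.Ico b c, ∑ j ∈ Finset.Ico b c, |∫ y, F y i * F y j ∂ν| :=
        Finset.sum_le_sum fun i _ => Finset.sum_le_sum fun j _ => le_abs_self _
    _ ≤ ∑ i ∈ Finset.Ico b c, ∑ j ∈ Finset.Ico b c,
          C * (r ^ (Nat.dist i j) + r ^ i + r ^ j) :=
        Finset.sum_le_sum fun i _ => Finset.sum_le_sum fun j _ => hB i j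
    _ = C * ((∑ i ∈ Finset.Ico b c, ∑ j ∈ Finset.Ico b c, r ^ Nat.dist i j)
          + (∑ i ∈ Finset.Ico b c, ∑ j ∈ Finset.Ico b c, r ^ i)
          + (∑ i ∈ Finset.Ico b c, ∑ j ∈ Finset.Ico b c, r ^ j)) := by
        simp only [mul_add, Finset.sum_add_distrib, Finset.mul_sum]
    _ ≤ C * (n * (2 / (1 - r)) + n * (1 / (1 - r)) + n * (1 / (1 - r))) := by
        apply mul_le_mul_of_nonneg_left _ hC.le
        exact add_le_add (add_le_add hA hBsum) hCsum
    _ = 4 * C * n / (1 - r) := by field_simp; ring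

/-- under the correlation bound of Lemma 3.6, summing the second-moment
bounds over the dyadic family `L_s` of intervals `[2^k·l, 2^k(l+1))` with
`0 ≤ k ≤ s−1`, `0 ≤ l ≤ 2^{s−k}−1`, gives
`Σ_{[b,c) ∈ L_s} ∫_Y (Σ_{i=b}^{c−1} F(y,i))² dν ≤ 4C·s·2^s/(1−q^{−δ})`. -/
theorem dyadic_sum_integral_sq_le_of_correlation_bound
    {Y : Type*} [MeasurableSpace Y] (ν : Measure Y) [IsProbabilityMeasure ν]
    (q C δ : ℝ) (hq : 1 < q) (hC : 0 < C) (hδ : 0 < δ)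
    (F : Y → ℕ → ℝ) (hFmeas : ∀ i : ℕ, Measurable fun y => F y i)
    (hFL2 : ∀ i : ℕ, MemLp (fun y => F y i) 2 ν)
    (hcorr : ∀ i j : ℕ, i ≤ j →
      |∫ y, F y i * F y j ∂ν| ≤ C * q ^ (-(δ * ((min i (j - i) : ℕ) : ℝ))))
    (s : ℕ) :
    ∑ k ∈ Finset.range s, ∑ l ∈ Finset.range (2 ^ (s - k)),
        ∫ y, (∑ i ∈ Finset.Ico (2 ^ k * l) (2 ^ k * (l + 1)), F y i) ^ 2 ∂ν
      ≤ 4 * C * (s : ℝ) * (2 : ℝ) ^ s / (1 - q ^ (-δ)) := by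
  have hq0 : (0 : ℝ) < q := lt_trans zero_lt_one hq
  set r : ℝ := q ^ (-δ) with hr
  have hr0 : 0 < r := Real.rpow_pos_of_pos hq0 _
  have hr1 : r < 1 := Real.rpow_lt_one_of_one_lt_of_neg hq (by linarith)
  have hcorr' : ∀ i j : ℕ, i ≤ j →
      |∫ y, F y i * F y j ∂ν| ≤ C * r ^ (min i (j - i)) := by
    intro i j hij
    refine (hcorr i j hij).trans_eq ?_
    congr 1
    rw [show -(δ * ((min i (j - i) : ℕ) : ℝ)) = (-δ) * ((min i (j - i) : ℕ) : ℝ) by ring,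
      Real.rpow_mul hq0.le, Real.rpow_natCast]
  have step : ∀ k ∈ Finset.range s,
      ∑ l ∈ Finset.range (2 ^ (s - k)),
        ∫ y, (∑ i ∈ Finset.Ico (2 ^ k * l) (2 ^ k * (l + 1)), F y i) ^ 2 ∂ν
      ≤ 4 * C * (2 : ℝ) ^ s / (1 - r) := by
    intro k hk
    have hk' : k ≤ s := le_of_lt (Finset.mem_range.mp hk)
    calc ∑ l ∈ Finset.range (2 ^ (s - k)),
          ∫ y, (∑ i ∈ Finset.Ico (2 ^ k * l) (2 ^ k * (l + 1)), F y i) ^ 2 ∂ν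
        ≤ ∑ _l ∈ Finset.range (2 ^ (s - k)), 4 * C * (2 : ℝ) ^ k / (1 - r) := by
          apply Finset.sum_le_sum
          intro l _
          have h := interval_int_bound ν C r hC hr0.le hr1 F hFL2 hcorr'
            (2 ^ k * l) (2 ^ k * (l + 1))
          have hcb : (2 ^ k * (l + 1) - 2 ^ k * l : ℕ) = 2 ^ k := by
            rw [Nat.mul_add, Nat.mul_one]
            exact Nat.add_sub_cancel_left _ _
          rw [hcb] at h
          push_cast at h
          exact h
      _ = ((2 ^ (s - k) : ℕ) : ℝ) * (4 * C * (2 : ℝ) ^ k / (1 - r)) := by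
          rw [Finset.sum_const, nsmul_eq_mul, Finset.card_range]
      _ = 4 * C * (2 : ℝ) ^ s / (1 - r) := by
          have h2 : (2 : ℝ) ^ s = 2 ^ (s - k) * 2 ^ k := by
            rw [← pow_add, Nat.sub_add_cancel hk']
          push_cast
          rw [h2]
          ring
  calc ∑ k ∈ Finset.range s, ∑ l ∈ Finset.range (2 ^ (s - k)),
        ∫ y, (∑ i ∈ Finset.Ico (2 ^ k * l) (2 ^ k * (l + 1)), F y i) ^ 2 ∂ν
      ≤ ∑ _k ∈ Finset.range s, 4 * C * (2 : ℝ) ^ s / (1 - r) :=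
        Finset.sum_le_sum step
    _ = (s : ℝ) * (4 * C * (2 : ℝ) ^ s / (1 - r)) := by
        rw [Finset.sum_const, nsmul_eq_mul, Finset.card_range]
    _ = 4 * C * (s : ℝ) * (2 : ℝ) ^ s / (1 - r) := by ring
end
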